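/- arXiv:2504.21551 — 7 statements merged into one kernel-verified Lean document; each statement's English description precedes it below -/
import Mathlib

section
/- Let (X, m) and (Y, m') be iterative midpoint sets, each equipped with its unique superconvex structure extending the midpoint operation (i.e. satisfying ½·x + ½·y = m(x,y)). Then for a function f : X → Y the following are equivalent: (1) f is a midpoint homomorphism, i.e. f(m(x,y)) = m'(f x, f y); (2) f is affine, i.e. f preserves every superconvex combination Σ'ᵢ λᵢ·xᵢ in which only finitely many λᵢ are nonzero; (3) f is superaffine, i.e. f(Σ'ᵢ λᵢ·xᵢ) = Σ'ᵢ λᵢ·f(xᵢ) for every superconvex combination. -/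
/-- A midpoint operation: idempotent, commutative, satisfying transposition. -/
def IsMidpoint {A : Type} (m : A → A → A) : Prop :=
  (∀ x, m x x = x) ∧ (∀ x y, m x y = m y x) ∧
    (∀ x y z w, m (m x y) (m z w) = m (m x z) (m y w))

/-- Cancellation: `m x y = m x z` implies `y = z`. -/
def Cancellative {A : Type} (m : A → A → A) : Prop :=
  ∀ x y z, m x y = m x z → y = z

/-- Iterativity in the category of sets. -/
def Iterative {A : Type} (m : A → A → A) : Prop :=
  ∀ (X : Type) (c : X → A × X), ∃! u : X → A, ∀ x, u x = m (c x).1 (u (c x).2)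

/-- The unfolding property of an infinitary operation `M` with respect to `m`. -/
def Unfolding {A : Type} (m : A → A → A) (M : (ℕ → A) → A) : Prop :=
  ∀ x : ℕ → A, M x = m (x 0) (M fun i => x (i + 1))

/-- The canonicity property of an infinitary operation `M` with respect to `m`. -/
def Canonicity {A : Type} (m : A → A → A) (M : (ℕ → A) → A) : Prop :=
  ∀ x y : ℕ → A, (∀ i, y i = m (x i) (y (i + 1))) → y 0 = M x

/-- A superconvex weight: a nonnegative sequence summing to 1. -/
def IsWeight (lam : ℕ → ℝ) : Prop := (∀ i, 0 ≤ lam i) ∧ ∑' i, lam i = 1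

/-- A superconvex structure on `X`: an operation of countable convex combination,
satisfying the projection and composition laws (on genuine weights). -/
structure SuperconvexStr (X : Type) where
  comb : (ℕ → ℝ) → (ℕ → X) → X
  proj : ∀ lam, IsWeight lam → ∀ k, lam k = 1 → (∀ i, i ≠ k → lam i = 0) →
    ∀ x, comb lam x = x k
  compos : ∀ lam, IsWeight lam → ∀ mu : ℕ → ℕ → ℝ, (∀ i, IsWeight (mu i)) →
    ∀ x : ℕ → X, comb lam (fun i => comb (mu i) x) = comb (fun j => ∑' i, lam i * mu i j) x

/-- The binary combination `λ·x + (1-λ)·y`. -/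
def SuperconvexStr.pair {X : Type} (S : SuperconvexStr X) (lam : ℝ) (x y : X) : X :=
  S.comb (fun i => if i = 0 then lam else if i = 1 then 1 - lam else 0)
    (fun i => if i = 0 then x else y)

/-- Cancellativity of a superconvex structure. -/
def SuperconvexStr.Cancellative {X : Type} (S : SuperconvexStr X) : Prop :=
  ∀ lam : ℝ, 0 < lam → lam < 1 → ∀ x y z : X, S.pair lam x z = S.pair lam y z → x = y

/-- Iterativity of a superconvex structure. -/
def SuperconvexStr.Iterative {X : Type} (S : SuperconvexStr X) : Prop :=
  ∀ (x y : ℕ → X) (lam mu : ℕ → ℝ),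
    (∀ i, 0 < lam i ∧ lam i < 1) → (∀ i, 0 < mu i ∧ mu i < 1) →
    (∀ i, lam i + mu i = 1) →
    (∀ i, x i = S.pair (lam i) (y i) (x (i + 1))) →
    Filter.Tendsto (fun n => ∏ j ∈ Finset.range n, mu j) Filter.atTop (nhds 0) →
    x 0 = S.comb (fun i => lam i * ∏ j ∈ Finset.range i, mu j) y

noncomputable section
namespace MHelp
open Filter

def dW : ℕ → ℝ := fun i => (1/2 : ℝ)^(i+1)
def dirac (k : ℕ) : ℕ → ℝ := fun j => if j = k then 1 else 0
def pairW : ℕ → ℝ := fun i => if i = 0 then (1/2 : ℝ) else if i = 1 then 1/2 else 0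

lemma isWeight_dirac (k : ℕ) : IsWeight (dirac k) := by
  constructor
  · intro i; unfold dirac; split <;> norm_num
  · rw [tsum_eq_single k]
    · simp [dirac]
    · intro b hb; simp [dirac, hb]

lemma comb_dirac {X : Type} (S : SuperconvexStr X) (k : ℕ) (x : ℕ → X) :
    S.comb (dirac k) x = x k := by
  apply S.proj _ (isWeight_dirac k) k (by simp [dirac]) (fun i hi => by simp [dirac, hi])

lemma isWeight_dW : IsWeight dW := by
  constructor
  · intro i; unfold dW; positivity
  · have h : dW = fun n => (1:ℝ)/2/2^n := by
      funext n; unfold dW; rw [pow_succ, div_pow]; norm_num; ring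
    rw [h]; exact tsum_geometric_two' 1

lemma summable_of_isWeight {lam : ℕ → ℝ} (h : IsWeight lam) : Summable lam := by
  by_contra hc
  have := h.2
  rw [tsum_eq_zero_of_not_summable hc] at this
  norm_num at this

lemma hasSum_of_isWeight {lam : ℕ → ℝ} (h : IsWeight lam) : HasSum lam 1 := by
  have h2 : (1:ℝ) = ∑' i, lam i := h.2.symm
  rw [h2]
  exact Summable.hasSum (summable_of_isWeight h)

lemma isWeight_pairW : IsWeight pairW := by
  constructor
  · intro i; unfold pairW; split <;> [norm_num; split <;> norm_num]
  · rw [tsum_eq_sum (s := {0, 1}) (by intro b hb; simp at hb; simp [pairW, hb])]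
    norm_num [pairW]

lemma pair_half {X : Type} (S : SuperconvexStr X) (x y : X) :
    S.pair (1/2) x y = S.comb pairW (fun i => if i = 0 then x else y) := by
  unfold SuperconvexStr.pair
  congr 1
  funext i
  unfold pairW
  split
  · rfl
  · split <;> norm_num

/-- midpoint mixing law -/
lemma comb_pairHalf {X : Type} (S : SuperconvexStr X) (α β : ℕ → ℝ) (hα : IsWeight α)
    (hβ : IsWeight β) (x : ℕ → X) :
    S.comb (fun j => (α j + β j)/2) x = S.pair (1/2) (S.comb α x) (S.comb β x) := by
  rw [pair_half]
  have h1 : (fun i => if i = 0 then S.comb α x else S.comb β x)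
      = fun i => S.comb (if i = 0 then α else β) x := by
    funext i; exact (apply_ite (fun w => S.comb w x) (i = 0) α β).symm
  rw [h1, S.compos pairW isWeight_pairW _ (fun i => by split <;> assumption) x]
  congr 1
  funext j
  rw [tsum_eq_sum (s := {0, 1}) (by intro b hb; simp at hb; simp [pairW, hb])]
  simp [pairW]
  ring


def nu : ℕ → ℝ := fun j => if j = 0 then 0 else (1/2:ℝ)^j

lemma isWeight_nu : IsWeight nu := by
  constructor
  · intro i; unfold nu; split
    · exact le_refl 0
    · positivity
  · have hs : Summable nu := by
      apply Summable.of_nonneg_of_le (fun j => ?_) (fun j => ?_) summable_geometric_two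
      · unfold nu; split
        · exact le_refl 0
        · positivity
      · unfold nu; split
        · positivity
        · exact le_refl _
    rw [Summable.tsum_eq_zero_add hs]
    have h2 : (fun b => nu (b + 1)) = dW := by
      funext b; simp [nu, dW]
    rw [h2]
    simp [nu, isWeight_dW.2]

lemma comb_nu {X : Type} (S : SuperconvexStr X) (x : ℕ → X) :
    S.comb nu x = S.comb dW (fun i => x (i+1)) := by
  have h1 : (fun i => x (i+1)) = fun i => S.comb (dirac (i+1)) x := by
    funext i; rw [comb_dirac]
  rw [h1, S.compos dW isWeight_dW _ (fun i => isWeight_dirac (i+1)) x]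
  congr 1
  funext j
  match j with
  | 0 =>
    have h0 : (fun i => dW i * dirac (i+1) 0) = fun _ => (0:ℝ) := by
      funext i; simp [dirac]
    rw [h0, tsum_zero]
    simp [nu]
  | (k+1) =>
    rw [tsum_eq_single k (fun b hb => by simp [dirac]; omega)]
    simp [dirac, nu, dW]

lemma comb_dW_unfold {X : Type} (S : SuperconvexStr X) (x : ℕ → X) :
    S.comb dW x = S.pair (1/2) (x 0) (S.comb dW (fun i => x (i+1))) := by
  rw [← comb_nu, pair_half]
  have h1 : (fun i => if i = 0 then x 0 else S.comb nu x)
      = fun i => S.comb (if i = 0 then dirac 0 else nu) x := by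
    funext i; by_cases h : i = 0 <;> simp [h, comb_dirac]
  rw [h1, S.compos pairW isWeight_pairW _
    (fun i => by split; exacts [isWeight_dirac 0, isWeight_nu]) x]
  congr 1
  funext j
  rw [tsum_eq_sum (s := {0, 1}) (by intro b hb; simp at hb; simp [pairW, hb])]
  match j with
  | 0 => norm_num [pairW, dirac, nu, dW]
  | (k+1) =>
    norm_num [pairW, dirac, nu, dW]
    rw [pow_succ]
    ring

/-- Truncation of a nat sequence so that partial sums are capped at B. -/
def trunc (d : ℕ → ℕ) (B : ℕ) : ℕ → ℕ :=
  fun j => min (d j) (B - min (∑ i ∈ Finset.range j, d i) B)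

lemma trunc_le (d : ℕ → ℕ) (B : ℕ) (j : ℕ) : trunc d B j ≤ d j := min_le_left _ _

lemma trunc_sum (d : ℕ → ℕ) (B : ℕ) (N : ℕ) :
    ∑ j ∈ Finset.range N, trunc d B j = min (∑ j ∈ Finset.range N, d j) B := by
  induction N with
  | zero => simp
  | succ n ih =>
    rw [Finset.sum_range_succ, Finset.sum_range_succ, ih]
    unfold trunc
    omega

lemma isWeight_dyadic (c : ℕ → ℕ) (N K : ℕ) (hsupp : ∀ j, N ≤ j → c j = 0)
    (hsum : ∑ j ∈ Finset.range N, c j = 2^K) :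
    IsWeight (fun j => (c j : ℝ) / 2^K) := by
  constructor
  · intro i; positivity
  · rw [tsum_eq_sum (s := Finset.range N)
      (by intro b hb; simp at hb; rw [hsupp b hb]; simp)]
    rw [← Finset.sum_div]
    rw [show ∑ j ∈ Finset.range N, (c j : ℝ) = ((∑ j ∈ Finset.range N, c j : ℕ) : ℝ) by
      push_cast; ring]
    rw [hsum]
    push_cast
    field_simp

lemma hasSum_dyadic (c : ℕ → ℕ) (N K : ℕ) (hsupp : ∀ j, N ≤ j → c j = 0)
    (hsum : ∑ j ∈ Finset.range N, c j = 2^K) :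
    HasSum (fun j => (c j : ℝ) / 2^K) 1 :=
  hasSum_of_isWeight (isWeight_dyadic c N K hsupp hsum)

/-- Midpoint homomorphisms preserve finite dyadic convex combinations. -/
lemma dyadic_pres {X Y : Type} {m : X → X → X} {m' : Y → Y → Y}
    (S : SuperconvexStr X) (S' : SuperconvexStr Y)
    (hS : ∀ x y : X, S.pair (1 / 2) x y = m x y)
    (hS' : ∀ x y : Y, S'.pair (1 / 2) x y = m' x y)
    (f : X → Y) (hom : ∀ x y, f (m x y) = m' (f x) (f y)) :
    ∀ (K : ℕ) (c : ℕ → ℕ) (N : ℕ), (∀ j, N ≤ j → c j = 0) →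
    (∑ j ∈ Finset.range N, c j = 2^K) → ∀ x : ℕ → X,
    f (S.comb (fun j => (c j : ℝ) / 2^K) x)
      = S'.comb (fun j => (c j : ℝ) / 2^K) (fun i => f (x i)) := by
  intro K
  induction K with
  | zero =>
    intro c N hsupp hsum x
    -- exactly one index carries value 1
    have hone : ∃ k, c k = 1 ∧ ∀ j, j ≠ k → c j = 0 := by
      simp only [pow_zero] at hsum
      have hex : ∃ k ∈ Finset.range N, c k ≠ 0 := by
        by_contra hc
        push_neg at hc
        rw [Finset.sum_eq_zero hc] at hsum
        omega
      obtain ⟨k, hkN, hk⟩ := hex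
      have h1 := Finset.sum_erase_add (Finset.range N) c hkN
      have hk1 : c k = 1 := by omega
      refine ⟨k, hk1, ?_⟩
      intro j hj
      by_cases hjN : j < N
      · have hA : ∑ x ∈ (Finset.range N).erase k, c x = 0 := by omega
        exact Finset.sum_eq_zero_iff.mp hA j
          (Finset.mem_erase.mpr ⟨hj, Finset.mem_range.mpr hjN⟩)
      · exact hsupp j (le_of_not_gt hjN)
    obtain ⟨k, hk1, hk0⟩ := hone
    have hw : (fun j => (c j : ℝ) / 2^0) = dirac k := by
      funext j
      by_cases h : j = k
      · simp [dirac, h, hk1]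
      · simp [dirac, h, hk0 j h]
    rw [hw, comb_dirac, comb_dirac]
  | succ K ih =>
    intro c N hsupp hsum x
    set a := trunc c (2^K) with ha
    set b := fun j => c j - a j with hb
    have haj : ∀ j, a j ≤ c j := trunc_le c (2^K)
    have hasum : ∑ j ∈ Finset.range N, a j = 2^K := by
      rw [ha, trunc_sum, hsum]
      have : (2:ℕ)^K ≤ 2^(K+1) := Nat.pow_le_pow_right (by norm_num) (by omega)
      omega
    have hbsum : ∑ j ∈ Finset.range N, b j = 2^K := by
      have hab : ∀ j, a j + b j = c j := by
        intro j; have h := haj j; simp only [hb]; omega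
      have h2 : ∑ j ∈ Finset.range N, (a j + b j) = 2^(K+1) := by
        rw [Finset.sum_congr rfl fun j _ => hab j]; exact hsum
      rw [Finset.sum_add_distrib] at h2
      omega
    have hasupp : ∀ j, N ≤ j → a j = 0 := fun j hj => by
      have := haj j; rw [hsupp j hj] at this; omega
    have hbsupp : ∀ j, N ≤ j → b j = 0 := fun j hj => by
      simp [hb, hsupp j hj, hasupp j hj]
    have key : (fun j => (c j : ℝ) / 2^(K+1))
        = fun j => (((a j : ℝ)/2^K) + ((b j : ℝ)/2^K)) / 2 := by
      funext j
      have : (b j : ℝ) = (c j : ℝ) - (a j : ℝ) := by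
        rw [hb]; push_cast [haj j]; ring
      rw [this, pow_succ]
      field_simp; ring
    rw [key]
    rw [comb_pairHalf S _ _ (isWeight_dyadic a N K hasupp hasum)
      (isWeight_dyadic b N K hbsupp hbsum) x, hS,
      comb_pairHalf S' _ _ (isWeight_dyadic a N K hasupp hasum)
      (isWeight_dyadic b N K hbsupp hbsum) (fun i => f (x i)), hS', hom,
      ih a N hasupp hasum x, ih b N hbsupp hbsum x]

/-- Existence of a finite dyadic minorant weight at scale t. -/
lemma step (ρ : ℕ → ℝ) (t : ℝ) (ht : 0 < t) (hnn : ∀ j, 0 ≤ ρ j)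
    (hsum : HasSum ρ (2*t)) :
    ∃ (N K : ℕ) (c : ℕ → ℕ), (∀ j, N ≤ j → c j = 0) ∧
      (∑ j ∈ Finset.range N, c j = 2^K) ∧ (∀ j, t * ((c j : ℝ)/2^K) ≤ ρ j) := by
  have htend := hsum.tendsto_sum_nat
  have hev : ∀ᶠ n in atTop, (3/2)*t < ∑ j ∈ Finset.range n, ρ j :=
    htend.eventually (eventually_gt_nhds (by linarith))
  obtain ⟨N, hN⟩ := hev.exists
  set K := N + 2 with hK
  set d : ℕ → ℕ := fun j => if j < N then ⌊ρ j * 2^K / t⌋₊ else 0 with hd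
  have hd_le : ∀ j, t * ((d j : ℝ)/2^K) ≤ ρ j := by
    intro j
    by_cases h : j < N
    · simp only [hd, if_pos h]
      have h1 : (⌊ρ j * 2^K / t⌋₊ : ℝ) ≤ ρ j * 2^K / t := Nat.floor_le (by have := hnn j; positivity)
      calc t * ((⌊ρ j * 2^K / t⌋₊ : ℝ)/2^K) ≤ t * ((ρ j * 2^K / t)/2^K) := by
            have h2 : (⌊ρ j * 2^K / t⌋₊:ℝ)/2^K ≤ (ρ j * 2^K/t)/2^K := by gcongr
            exact mul_le_mul_of_nonneg_left h2 (le_of_lt ht)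
        _ = ρ j := by field_simp
    · simp only [hd, if_neg h]
      simpa using hnn j
  have hd_sum : 2^K ≤ ∑ j ∈ Finset.range N, d j := by
    have hfl : ∀ j ∈ Finset.range N, ρ j * 2^K / t - 1 ≤ (d j : ℝ) := by
      intro j hj
      simp only [Finset.mem_range] at hj
      simp only [hd, if_pos hj]
      exact le_of_lt (Nat.sub_one_lt_floor _)
    have hsum1 : ∑ j ∈ Finset.range N, (ρ j * 2^K / t - 1)
        ≤ ∑ j ∈ Finset.range N, (d j : ℝ) := Finset.sum_le_sum hfl
    have hsum2 : ∑ j ∈ Finset.range N, (ρ j * 2^K / t - 1)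
        = (∑ j ∈ Finset.range N, ρ j) * (2^K/t) - N := by
      rw [Finset.sum_sub_distrib]
      simp [Finset.sum_mul, mul_div_assoc]
    have hNlt : (N:ℝ) < 2^(N+1) := by
      have h1 : (N:ℕ) < 2^(N+1) :=
        lt_of_lt_of_le (Nat.lt_two_pow_self (n := N)) (Nat.pow_le_pow_right (by norm_num) (Nat.le_succ N))
      exact_mod_cast h1
    have hKval : (2:ℝ)^K = 2 * 2^(N+1) := by
      rw [hK]; rw [pow_succ]; ring
    have hpos : (0:ℝ) < 2^K/t := by positivity
    have heq : (3/2)*t*(2^K/t) = (3/2)*2^K := by field_simp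
    have hmain : (2^K:ℝ) ≤ (∑ j ∈ Finset.range N, ρ j) * (2^K/t) - N := by
      nlinarith [hN, hpos, heq, hNlt, hKval]
    have hfin : (2^K:ℝ) ≤ ∑ j ∈ Finset.range N, (d j : ℝ) := by linarith [hsum1, hsum2.symm ▸ hmain]
    have : ((2^K : ℕ):ℝ) ≤ ((∑ j ∈ Finset.range N, d j : ℕ) : ℝ) := by push_cast; linarith
    exact_mod_cast this
  refine ⟨N, K, trunc d (2^K), ?_, ?_, ?_⟩
  · intro j hj
    have h0 : d j = 0 := by simp [hd, Nat.not_lt.mpr hj]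
    have := trunc_le d (2^K) j
    omega
  · rw [trunc_sum]; omega
  · intro j
    refine le_trans ?_ (hd_le j)
    have hcd : ((trunc d (2^K) j : ℕ):ℝ) ≤ (d j : ℝ) := by exact_mod_cast trunc_le d (2^K) j
    have h2 : ((trunc d (2^K) j : ℕ):ℝ)/2^K ≤ (d j:ℝ)/2^K := by gcongr
    exact mul_le_mul_of_nonneg_left h2 (le_of_lt ht)

/-- f commutes with the dyadic barycenter operation M. -/
lemma M_pres {X Y : Type} {m : X → X → X} {m' : Y → Y → Y} (hit' : Iterative m')
    (S : SuperconvexStr X) (S' : SuperconvexStr Y)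
    (hS : ∀ x y : X, S.pair (1 / 2) x y = m x y)
    (hS' : ∀ x y : Y, S'.pair (1 / 2) x y = m' x y)
    (f : X → Y) (hom : ∀ x y, f (m x y) = m' (f x) (f y)) :
    ∀ s : ℕ → X, f (S.comb dW s) = S'.comb dW (fun i => f (s i)) := by
  obtain ⟨u, hu, huniq⟩ := hit' (ℕ → X) (fun s => (f (s 0), fun i => s (i+1)))
  have h1 : (fun s : ℕ → X => f (S.comb dW s)) = u := by
    apply huniq
    intro s
    rw [comb_dW_unfold S s, hS, hom]
  have h2 : (fun s : ℕ → X => S'.comb dW (fun i => f (s i))) = u := by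
    apply huniq
    intro s
    rw [comb_dW_unfold S' (fun i => f (s i)), hS']
  intro s
  exact congrFun (h1.trans h2.symm) s

lemma superaffine {X Y : Type} {m : X → X → X} {m' : Y → Y → Y} (hit' : Iterative m')
    (S : SuperconvexStr X) (S' : SuperconvexStr Y)
    (hS : ∀ x y : X, S.pair (1 / 2) x y = m x y)
    (hS' : ∀ x y : Y, S'.pair (1 / 2) x y = m' x y)
    (f : X → Y) (hom : ∀ x y, f (m x y) = m' (f x) (f y)) :
    ∀ lam, IsWeight lam → ∀ x : ℕ → X,
      f (S.comb lam x) = S'.comb lam (fun i => f (x i)) := by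
  have hpick : ∀ (r : ℕ → ℝ) (n : ℕ), ∃ w : ℕ → ℝ,
      ((∀ j, 0 ≤ r j) ∧ HasSum r ((1/2:ℝ)^n)) →
      ((∃ (N K : ℕ) (c : ℕ → ℕ), (∀ j, N ≤ j → c j = 0) ∧ (∑ j ∈ Finset.range N, c j = 2^K) ∧
         w = fun j => (c j:ℝ)/2^K) ∧ ∀ j, (1/2:ℝ)^(n+1) * w j ≤ r j) := by
    intro r n
    by_cases h : (∀ j, 0 ≤ r j) ∧ HasSum r ((1/2:ℝ)^n)
    · obtain ⟨N, K, c, h1, h2, h3⟩ := step r ((1/2)^(n+1)) (by positivity) h.1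
        (by have : 2 * ((1/2:ℝ)^(n+1)) = (1/2)^n := by rw [pow_succ]; ring
            rw [this]; exact h.2)
      exact ⟨fun j => (c j:ℝ)/2^K, fun _ => ⟨⟨N, K, c, h1, h2, rfl⟩, h3⟩⟩
    · exact ⟨fun _ => 0, fun hc => absurd hc h⟩
  choose pick hpick using hpick
  intro lam hlam x
  let ρ : ℕ → ℕ → ℝ := fun n =>
    Nat.rec lam (fun n r => fun j => r j - (1/2:ℝ)^(n+1) * pick r n j) n
  have hρ0 : ρ 0 = lam := rfl
  have hρs : ∀ n, ρ (n+1) = fun j => ρ n j - (1/2:ℝ)^(n+1) * pick (ρ n) n j := fun n => rfl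
  have inv : ∀ n, (∀ j, 0 ≤ ρ n j) ∧ HasSum (ρ n) ((1/2:ℝ)^n) := by
    intro n
    induction n with
    | zero =>
      refine ⟨hlam.1, ?_⟩
      have := hasSum_of_isWeight hlam
      simpa [hρ0] using this
    | succ n ih =>
      obtain ⟨⟨N, K, c, hc0, hc1, hceq⟩, hble⟩ := hpick (ρ n) n ih
      have hws : HasSum (pick (ρ n) n) 1 := by
        rw [hceq]; exact hasSum_dyadic c N K hc0 hc1
      constructor
      · intro j
        rw [hρs n]
        have := hble j
        dsimp only
        linarith
      · rw [hρs n]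
        have h1 := ih.2.sub (hws.mul_left ((1/2:ℝ)^(n+1)))
        have h2 : (1/2:ℝ)^n - (1/2)^(n+1) * 1 = (1/2)^(n+1) := by rw [pow_succ]; ring
        rw [h2] at h1
        exact h1
  have hμ := fun n => hpick (ρ n) n (inv n)
  have hμw : ∀ n, IsWeight (pick (ρ n) n) := by
    intro n
    obtain ⟨⟨N, K, c, h0, h1, he⟩, _⟩ := hμ n
    rw [he]; exact isWeight_dyadic c N K h0 h1
  have htel : ∀ j n, ∑ k ∈ Finset.range n, (1/2:ℝ)^(k+1) * pick (ρ k) k j = lam j - ρ n j := by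
    intro j n
    induction n with
    | zero => simp [hρ0]
    | succ n ih =>
      rw [Finset.sum_range_succ, ih, hρs n]
      dsimp only
      ring
  have hlim : ∀ j, HasSum (fun n => (1/2:ℝ)^(n+1) * pick (ρ n) n j) (lam j) := by
    intro j
    rw [hasSum_iff_tendsto_nat_of_nonneg
      (fun n => mul_nonneg (by positivity) ((hμw n).1 j))]
    have h1 : (fun n => ∑ k ∈ Finset.range n, (1/2:ℝ)^(k+1) * pick (ρ k) k j)
        = fun n => lam j - ρ n j := funext (htel j)
    rw [h1]
    have h2 : Tendsto (fun n => ρ n j) atTop (nhds 0) := by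
      have hub : ∀ n, ρ n j ≤ (1/2:ℝ)^n :=
        fun n => le_hasSum (inv n).2 j (fun i _ => (inv n).1 i)
      exact squeeze_zero (fun n => (inv n).1 j) hub
        (tendsto_pow_atTop_nhds_zero_of_lt_one (by norm_num) (by norm_num))
    have h3 := (tendsto_const_nhds (x := lam j) (f := atTop)).sub h2
    simpa using h3
  have hlamW : (fun j => ∑' n, dW n * pick (ρ n) n j) = lam := by
    funext j
    exact (hlim j).tsum_eq
  have hMX : S.comb lam x = S.comb dW (fun n => S.comb (pick (ρ n) n) x) := by
    rw [S.compos dW isWeight_dW _ hμw x, hlamW]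
  have hMY : S'.comb lam (fun i => f (x i))
      = S'.comb dW (fun n => S'.comb (pick (ρ n) n) (fun i => f (x i))) := by
    rw [S'.compos dW isWeight_dW _ hμw (fun i => f (x i)), hlamW]
  rw [hMX, hMY, M_pres hit' S S' hS hS' f hom]
  congr 1
  funext n
  obtain ⟨⟨N, K, c, h0, h1, he⟩, _⟩ := hμ n
  rw [he]
  exact dyadic_pres S S' hS hS' f hom K c N h0 h1 x

lemma affine_to_hom {X Y : Type} {m : X → X → X} {m' : Y → Y → Y}
    (S : SuperconvexStr X) (S' : SuperconvexStr Y)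
    (hS : ∀ x y : X, S.pair (1 / 2) x y = m x y)
    (hS' : ∀ x y : Y, S'.pair (1 / 2) x y = m' x y)
    (f : X → Y)
    (h : ∀ lam, IsWeight lam → (Function.support lam).Finite →
      ∀ x : ℕ → X, f (S.comb lam x) = S'.comb lam (fun i => f (x i))) :
    ∀ x y, f (m x y) = m' (f x) (f y) := by
  intro x y
  have hfin : (Function.support pairW).Finite := by
    apply Set.Finite.subset ((Set.finite_singleton 1).insert 0)
    intro i hi
    simp only [Function.mem_support] at hi
    by_contra hc
    simp only [Set.mem_insert_iff, Set.mem_singleton_iff] at hc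
    push_neg at hc
    exact hi (by simp [pairW, hc.1, hc.2])
  rw [← hS x y, ← hS' (f x) (f y), pair_half, pair_half,
    h pairW isWeight_pairW hfin (fun i => if i = 0 then x else y)]
  congr 1
  funext i
  by_cases hi : i = 0 <;> simp [hi]

end MHelp

end

/-- For iterative midpoint sets equipped with their unique superconvex
structures, midpoint homomorphisms, affine maps and superaffine maps coincide. -/
theorem midpoint_hom_iff_affine_iff_superaffine (X Y : Type)
    (m : X → X → X) (m' : Y → Y → Y)
    (hm : IsMidpoint m) (hm' : IsMidpoint m')
    (hit : Iterative m) (hit' : Iterative m')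
    (S : SuperconvexStr X) (S' : SuperconvexStr Y)
    (hS : ∀ x y : X, S.pair (1 / 2) x y = m x y)
    (hS' : ∀ x y : Y, S'.pair (1 / 2) x y = m' x y)
    (f : X → Y) :
    ((∀ x y, f (m x y) = m' (f x) (f y)) ↔
      (∀ lam, IsWeight lam → (Function.support lam).Finite →
        ∀ x : ℕ → X, f (S.comb lam x) = S'.comb lam (fun i => f (x i)))) ∧
    ((∀ x y, f (m x y) = m' (f x) (f y)) ↔
      (∀ lam, IsWeight lam →
        ∀ x : ℕ → X, f (S.comb lam x) = S'.comb lam (fun i => f (x i)))) := by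
  constructor
  · constructor
    · intro hom lam hw _ x
      exact MHelp.superaffine hit' S S' hS hS' f hom lam hw x
    · exact MHelp.affine_to_hom S S' hS hS' f
  · constructor
    · intro hom
      exact MHelp.superaffine hit' S S' hS hS' f hom
    · intro h
      apply MHelp.affine_to_hom S S' hS hS' f
      intro lam hw _ x
      exact h lam hw x
end

section
/- If (X, m) is a cancellative midpoint set, then there is at most one superconvex structure on X satisfying ½·x + ½·y = m(x,y) for all x, y ∈ X: any two superconvex structures Σ' and Σ'' on X whose binary ½-½ combinations both equal m must agree on every superconvex combination. -/
open Filter Finset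

namespace AuxSup

/-- tsum of a singleton-supported family. -/
lemma tsum_ite_eq' (k : ℕ) (a : ℕ → ℝ) : ∑' j, (if j = k then a j else 0) = a k := by
  have : (fun j => if j = k then a j else 0) = fun j => if j = k then a k else 0 := by
    funext j; by_cases h : j = k <;> simp [h]
  rw [this, tsum_ite_eq]

lemma weight_summable {lam : ℕ → ℝ} (h : IsWeight lam) : Summable lam := by
  by_contra hs
  have := tsum_eq_zero_of_not_summable hs
  rw [h.2] at this; norm_num at this

/-- tsum from convergence of partial sums, for nonneg sequences. -/
lemma tsum_eq_of_partial {f : ℕ → ℝ} (hf : ∀ n, 0 ≤ f n) {a : ℝ}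
    (h : Tendsto (fun N => ∑ n ∈ range N, f n) atTop (nhds a)) : ∑' n, f n = a := by
  have hmono : Monotone (fun N => ∑ n ∈ range N, f n) := by
    intro i j hij
    exact Finset.sum_le_sum_of_subset_of_nonneg (Finset.range_subset_range.2 hij) (fun k _ _ => hf k)
  have hle : ∀ N, ∑ n ∈ range N, f n ≤ a := hmono.ge_of_tendsto h
  have hs : Summable f := summable_of_sum_range_le hf hle
  exact tendsto_nhds_unique hs.hasSum.tendsto_sum_nat h

noncomputable def geom : ℕ → ℝ := fun i => (2:ℝ)⁻¹ ^ (i + 1)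

lemma geom_pos (i : ℕ) : 0 < geom i := by unfold geom; positivity

lemma geom_summable : Summable geom := by
  have := summable_geometric_of_lt_one (r := (2:ℝ)⁻¹) (by norm_num) (by norm_num)
  exact (this.mul_right (2:ℝ)⁻¹).congr (fun i => by simp [geom, pow_succ])

lemma geom_weight : IsWeight geom := by
  refine ⟨fun i => (geom_pos i).le, ?_⟩
  have h : ∑' i : ℕ, (2:ℝ)⁻¹ ^ i = 2 := by
    rw [tsum_geometric_of_lt_one (by norm_num) (by norm_num)]; norm_num
  have : ∑' i : ℕ, geom i = (∑' i : ℕ, (2:ℝ)⁻¹ ^ i) * (2:ℝ)⁻¹ := by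
    rw [← tsum_mul_right]
    exact tsum_congr (fun i => by simp [geom, pow_succ])
  rw [this, h]; norm_num

/-- the weight (t, 1-t, 0, 0, ...) used by `pair`. -/
def pw (t : ℝ) : ℕ → ℝ := fun i => if i = 0 then t else if i = 1 then 1 - t else 0

lemma pw_weight {t : ℝ} (h0 : 0 ≤ t) (h1 : t ≤ 1) : IsWeight (pw t) := by
  constructor
  · intro i; unfold pw; split_ifs <;> linarith
  · rw [tsum_eq_sum (s := {0, 1}) (by intro b hb; simp at hb; simp [pw, hb.1, hb.2])]
    simp [pw]

/-- Dirac weight. -/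
def dirac (k : ℕ) : ℕ → ℝ := fun j => if j = k then 1 else 0

lemma dirac_weight (k : ℕ) : IsWeight (dirac k) :=
  ⟨fun i => by unfold dirac; split_ifs <;> norm_num, by simp [dirac, tsum_ite_eq]⟩

lemma comb_dirac {X : Type} (S : SuperconvexStr X) (k : ℕ) (x : ℕ → X) :
    S.comb (dirac k) x = x k :=
  S.proj _ (dirac_weight k) k (by simp [dirac]) (fun i hi => by simp [dirac, hi]) x

/-- pushforward of a weight along a map of indices. -/
noncomputable def push (f : ℕ → ℕ) (lam : ℕ → ℝ) : ℕ → ℝ :=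
  fun k => ∑' j, (if k = f j then lam j else 0)

lemma push_weight {lam : ℕ → ℝ} (h : IsWeight lam) (f : ℕ → ℕ) : IsWeight (push f lam) := by
  have hsl := weight_summable h
  set F : ℕ × ℕ → ℝ := fun p => if p.1 = f p.2 then lam p.2 else 0 with hF
  have he : Function.Injective (fun j => ((f j, j) : ℕ × ℕ)) := by
    intro a b hab; exact (Prod.mk.injEq _ _ _ _ ▸ hab).2
  have hsupp : ∀ p ∉ Set.range (fun j => ((f j, j) : ℕ × ℕ)), F p = 0 := by
    rintro ⟨k, j⟩ hp
    have : ¬ (k = f j) := by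
      intro hkj; exact hp ⟨j, by simp [hkj]⟩
    simp [hF, this]
  have hFe : (F ∘ fun j => ((f j, j) : ℕ × ℕ)) = lam := by
    funext j; simp [hF]
  have hsF : Summable F := (he.summable_iff hsupp).1 (by rw [hFe]; exact hsl)
  have hinner : ∀ k, Summable (fun j => F (k, j)) := by
    intro k
    refine Summable.of_nonneg_of_le (fun j => ?_) (fun j => ?_) hsl
    · simp only [hF]; split_ifs <;> [exact h.1 j; exact le_rfl]
    · simp only [hF]; split_ifs <;> [exact le_rfl; exact h.1 j]
  constructor
  · intro k; exact tsum_nonneg (fun j => by split_ifs <;> [exact h.1 j; exact le_rfl])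
  · have h1 : ∑' k, push f lam k = ∑' (p : ℕ × ℕ), F p := (Summable.tsum_prod' hsF hinner).symm
    have h2 : ∑' (p : ℕ × ℕ), F p = ∑' j, lam j := by
      have hss : Function.support F ⊆ Set.range (fun j => ((f j, j) : ℕ × ℕ)) := by
        intro p hp
        by_contra hr
        exact hp (hsupp _ hr)
      rw [← he.tsum_eq hss]
      exact tsum_congr (fun j => by simp [hF])
    rw [h1, h2, h.2]

/-- the key pushforward property of combinations. -/
lemma comb_push {X : Type} (S : SuperconvexStr X) {lam : ℕ → ℝ} (h : IsWeight lam)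
    (f : ℕ → ℕ) (z : ℕ → X) :
    S.comb lam (fun j => z (f j)) = S.comb (push f lam) z := by
  have := S.compos lam h (fun j => dirac (f j)) (fun j => dirac_weight (f j)) z
  have h1 : (fun j => S.comb (dirac (f j)) z) = fun j => z (f j) := by
    funext j; exact comb_dirac S (f j) z
  rw [h1] at this
  rw [this]
  congr 1
  funext k
  unfold push
  exact tsum_congr (fun j => by unfold dirac; split_ifs <;> simp)

end AuxSup

namespace AuxSup

/-- shifted geometric weight: (0, 1/2, 1/4, ...) -/
noncomputable def geomS : ℕ → ℝ := fun k => if k = 0 then 0 else (2:ℝ)⁻¹ ^ k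

lemma geomS_eq_push : geomS = push (fun j => j + 1) geom := by
  funext k
  unfold push
  rcases k with _ | n
  · simp [geomS]
  · rw [show (fun j => if n + 1 = j + 1 then geom j else 0) = fun j => if j = n then geom j else 0
      from funext fun j => by
        by_cases h : j = n
        · simp [h]
        · rw [if_neg (by omega), if_neg h]]
    rw [tsum_ite_eq' n geom]
    simp [geomS, geom]

lemma geomS_weight : IsWeight geomS := geomS_eq_push ▸ push_weight geom_weight _

lemma pair_eq_comb {X : Type} (S : SuperconvexStr X) (t : ℝ) (x y : X) :
    S.pair t x y = S.comb (pw t) (fun i => if i = 0 then x else y) := rfl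

/-- Unfolding: a geometric combination peels its head as a 1/2-pair. -/
lemma unfold_geom {X : Type} (S : SuperconvexStr X) (z : ℕ → X) :
    S.comb geom z = S.pair (1/2) (z 0) (S.comb geom (fun i => z (i + 1))) := by
  have hrows : ∀ i : ℕ, IsWeight (if i = 0 then dirac 0 else geomS) := by
    intro i; split_ifs; exacts [dirac_weight 0, geomS_weight]
  have hcomp := S.compos (pw (1/2)) (pw_weight (by norm_num) (by norm_num))
    (fun i => if i = 0 then dirac 0 else geomS) hrows z
  have hseq : (fun i => S.comb (if i = 0 then dirac 0 else geomS) z)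
      = fun i => if i = 0 then z 0 else S.comb geom (fun i => z (i + 1)) := by
    funext i
    by_cases h : i = 0
    · simp only [h, if_pos rfl, if_pos rfl]; exact comb_dirac S 0 z
    · simp only [if_neg h]
      rw [geomS_eq_push, ← comb_push S geom_weight (fun j => j + 1) z]
  have hagg : (fun j => ∑' i, pw (1/2) i * (if i = 0 then dirac 0 else geomS) j) = geom := by
    funext j
    rw [tsum_eq_sum (s := {0, 1}) (by
      intro b hb
      simp only [Finset.mem_insert, Finset.mem_singleton] at hb
      push_neg at hb
      simp [pw, hb.1, hb.2])]
    rw [Finset.sum_pair (by norm_num : (0:ℕ) ≠ 1)]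
    rcases j with _ | n
    · norm_num [pw, dirac, geomS, geom]
    · norm_num [pw, dirac, geomS, geom, pow_succ]
      ring
  rw [pair_eq_comb, ← hseq, hcomp, hagg]

/-- the interleaving of two sequences. -/
def interleave {X : Type} (z y : ℕ → X) : ℕ → X :=
  fun k => if k % 2 = 0 then z (k / 2) else y (k / 2)

lemma interleave_even {X : Type} (z y : ℕ → X) (i : ℕ) : interleave z y (2 * i) = z i := by
  unfold interleave
  rw [if_pos (by omega), show 2 * i / 2 = i by omega]

lemma interleave_odd {X : Type} (z y : ℕ → X) (i : ℕ) : interleave z y (2 * i + 1) = y i := by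
  unfold interleave
  rw [if_neg (by omega), show (2 * i + 1) / 2 = i by omega]

/-- the weight 1/2 * geom (k/2) on interleaved indices. -/
noncomputable def xw : ℕ → ℝ := fun k => geom (k / 2) * (2:ℝ)⁻¹

/-- the two-point row selecting positions 2n and 2n+1 with weight 1/2 each. -/
noncomputable def row2 (n : ℕ) : ℕ → ℝ := fun k => if k = 2*n ∨ k = 2*n + 1 then (2:ℝ)⁻¹ else 0

lemma row2_eq_push (n : ℕ) : row2 n = push (fun j => if j = 0 then 2*n else 2*n+1) (pw (1/2)) := by
  funext k
  unfold push row2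
  by_cases h0 : k = 2*n
  · rw [if_pos (Or.inl h0)]
    rw [show (fun j => if k = (if j = 0 then 2*n else 2*n+1) then pw (1/2) j else 0)
        = fun j => if j = 0 then pw (1/2) j else 0 from funext fun j => by
      by_cases hj : j = 0 <;> simp [hj, h0] <;> omega]
    rw [tsum_ite_eq' 0 (pw (1/2))]; norm_num [pw]
  by_cases h1 : k = 2*n + 1
  · rw [if_pos (Or.inr h1)]
    rw [show (fun j => if k = (if j = 0 then 2*n else 2*n+1) then pw (1/2) j else 0)
        = fun j => if j = 1 then pw (1/2) j else 0 from funext fun j => by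
      rcases j with _ | _ | j <;> simp [h1, pw] <;> omega]
    rw [tsum_ite_eq' 1 (pw (1/2))]; norm_num [pw]
  · rw [if_neg (by tauto)]
    rw [show (fun j => if k = (if j = 0 then 2*n else 2*n+1) then pw (1/2) j else 0)
        = fun _ => (0:ℝ) from funext fun j => by
      by_cases hj : j = 0 <;> simp [hj, h0, h1]]
    exact tsum_zero.symm

lemma row2_weight (n : ℕ) : IsWeight (row2 n) :=
  row2_eq_push n ▸ push_weight (pw_weight (by norm_num) (by norm_num)) _

/-- Splitting an interleaved geometric combination into even and odd halves. -/
lemma comb_xw_split {X : Type} (S : SuperconvexStr X) (z y : ℕ → X) :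
    S.comb xw (interleave z y) = S.pair (1/2) (S.comb geom z) (S.comb geom y) := by
  set w := interleave z y
  set r0 := push (fun i => 2 * i) geom with hr0
  set r1 := push (fun i => 2 * i + 1) geom with hr1
  have hrows : ∀ i : ℕ, IsWeight (if i = 0 then r0 else r1) := by
    intro i; split_ifs
    exacts [push_weight geom_weight _, push_weight geom_weight _]
  have hcomp := S.compos (pw (1/2)) (pw_weight (by norm_num) (by norm_num))
    (fun i => if i = 0 then r0 else r1) hrows w
  have hseq : (fun i => S.comb (if i = 0 then r0 else r1) w)
      = fun i => if i = 0 then S.comb geom z else S.comb geom y := by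
    funext i
    by_cases h : i = 0
    · simp only [h, reduceIte]
      rw [hr0, ← comb_push S geom_weight (fun i => 2 * i) w]
      congr 1; funext i; exact interleave_even z y i
    · simp only [if_neg h]
      rw [hr1, ← comb_push S geom_weight (fun i => 2 * i + 1) w]
      congr 1; funext i; exact interleave_odd z y i
  have hr0k : ∀ k, r0 k = if k % 2 = 0 then geom (k/2) else 0 := by
    intro k
    rw [hr0]; unfold push
    by_cases h : k % 2 = 0
    · rw [if_pos h]
      rw [show (fun j => if k = 2 * j then geom j else 0) = fun j => if j = k/2 then geom j else 0
        from funext fun j => by by_cases hj : j = k/2 <;> simp [hj] <;> omega]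
      exact tsum_ite_eq' _ geom
    · rw [if_neg h]
      rw [show (fun j => if k = 2 * j then geom j else 0) = fun _ => (0:ℝ)
        from funext fun j => by rw [if_neg (by omega)]]
      exact tsum_zero
  have hr1k : ∀ k, r1 k = if k % 2 = 0 then 0 else geom (k/2) := by
    intro k
    rw [hr1]; unfold push
    by_cases h : k % 2 = 0
    · rw [if_pos h]
      rw [show (fun j => if k = 2 * j + 1 then geom j else 0) = fun _ => (0:ℝ)
        from funext fun j => by rw [if_neg (by omega)]]
      exact tsum_zero
    · rw [if_neg h]
      rw [show (fun j => if k = 2 * j + 1 then geom j else 0)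
          = fun j => if j = k/2 then geom j else 0
        from funext fun j => by by_cases hj : j = k/2 <;> simp [hj] <;> omega]
      exact tsum_ite_eq' _ geom
  have hagg : (fun k => ∑' i, pw (1/2) i * (if i = 0 then r0 else r1) k) = xw := by
    funext k
    rw [tsum_eq_sum (s := {0, 1}) (by
      intro b hb
      simp only [Finset.mem_insert, Finset.mem_singleton] at hb
      push_neg at hb
      simp [pw, hb.1, hb.2])]
    rw [Finset.sum_pair (by norm_num : (0:ℕ) ≠ 1)]
    rw [if_pos rfl, if_neg (Nat.one_ne_zero), hr0k, hr1k]
    unfold pw xw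
    by_cases h : k % 2 = 0 <;> simp [h] <;> ring
  rw [pair_eq_comb, ← hseq, hcomp, hagg]

/-- One round of unfolding an m-guarded sequence inside a geometric combination. -/
lemma comb_geom_unfold_rec {X : Type} (S : SuperconvexStr X) (z y : ℕ → X)
    (hrec : ∀ n, y n = S.pair (1/2) (z n) (y (n + 1))) :
    S.comb geom y = S.comb xw (interleave z (fun n => y (n + 1))) := by
  set w := interleave z (fun n => y (n + 1)) with hw
  have hrows : ∀ n : ℕ, IsWeight (row2 n) := row2_weight
  have hcomp := S.compos geom geom_weight row2 hrows w
  have hseq : (fun n => S.comb (row2 n) w) = y := by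
    funext n
    rw [row2_eq_push, ← comb_push S (pw_weight (by norm_num) (by norm_num)) _ w]
    have : (fun j => w (if j = 0 then 2*n else 2*n+1)) = fun j => if j = 0 then z n else y (n+1) := by
      funext j
      by_cases hj : j = 0
      · simp only [hj, if_pos rfl, reduceIte]; exact interleave_even _ _ n
      · simp only [if_neg hj]; exact interleave_odd _ _ n
    rw [this]
    exact (hrec n).symm
  have hagg : (fun k => ∑' n, geom n * row2 n k) = xw := by
    funext k
    rw [show (fun n => geom n * row2 n k) = fun n => if n = k / 2 then geom n * (2:ℝ)⁻¹ else 0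
      from funext fun n => by
        unfold row2
        by_cases h : k = 2*n ∨ k = 2*n + 1
        · rw [if_pos h, if_pos (by omega)]
        · rw [if_neg h, if_neg (by omega), mul_zero]]
    rw [tsum_ite_eq' _ (fun n => geom n * (2:ℝ)⁻¹)]
    rfl
  rw [← hagg, ← hcomp, hseq]

/-- Canonicity: an m-guarded solution equals the geometric combination. -/
lemma canonicity {X : Type} (m : X → X → X) (hm : IsMidpoint m) (hc : Cancellative m)
    (S : SuperconvexStr X) (hS : ∀ x y : X, S.pair (1 / 2) x y = m x y)
    (z y : ℕ → X) (hrec : ∀ n, y n = m (z n) (y (n + 1))) :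
    y 0 = S.comb geom z := by
  have hrec' : ∀ n, y n = S.pair (1/2) (z n) (y (n + 1)) := by
    intro n; rw [hS]; exact hrec n
  have h1 : S.comb geom y = m (y 0) (S.comb geom (fun n => y (n + 1))) := by
    rw [unfold_geom S y, hS]
  have h2 : S.comb geom y = m (S.comb geom z) (S.comb geom (fun n => y (n + 1))) := by
    rw [comb_geom_unfold_rec S z y hrec', comb_xw_split S z (fun n => y (n + 1)), hS]
  have h3 : m (y 0) (S.comb geom (fun n => y (n + 1)))
      = m (S.comb geom z) (S.comb geom (fun n => y (n + 1))) := by rw [← h1, h2]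
  have h4 := h3
  rw [hm.2.1 (y 0), hm.2.1 (S.comb geom z)] at h4
  exact hc _ _ _ h4

end AuxSup

namespace AuxSup

/-- The two structures agree on geometric combinations. -/
lemma geom_agree {X : Type} (m : X → X → X) (hm : IsMidpoint m) (hc : Cancellative m)
    (S S' : SuperconvexStr X)
    (hS : ∀ x y : X, S.pair (1 / 2) x y = m x y)
    (hS' : ∀ x y : X, S'.pair (1 / 2) x y = m x y) (z : ℕ → X) :
    S.comb geom z = S'.comb geom z := by
  set y : ℕ → X := fun n => S'.comb geom (fun i => z (n + i)) with hy
  have hrec : ∀ n, y n = m (z n) (y (n + 1)) := by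
    intro n
    have h := unfold_geom S' (fun i => z (n + i))
    rw [hS'] at h
    have h1 : (fun i => z (n + (i + 1))) = fun i => z (n + 1 + i) := by
      funext i; congr 1; omega
    rw [h1] at h
    simpa [hy] using h
  have h0 := canonicity m hm hc S hS z y hrec
  have : y 0 = S'.comb geom z := by simp [hy]
  rw [this] at h0
  exact h0.symm

/-- binary digits of a real number in [0,1). -/
noncomputable def bdig (t : ℝ) (n : ℕ) : ℤ := ⌊t * 2^(n+1)⌋ - 2 * ⌊t * 2^n⌋

lemma bdig_01 (t : ℝ) (n : ℕ) : bdig t n = 0 ∨ bdig t n = 1 := by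
  have hlow : 2 * ⌊t * 2^n⌋ ≤ ⌊t * 2^(n+1)⌋ := by
    apply Int.le_floor.2
    push_cast
    have := Int.floor_le (t * 2^n)
    rw [pow_succ]
    nlinarith
  have hup : ⌊t * 2^(n+1)⌋ < 2 * ⌊t * 2^n⌋ + 2 := by
    apply Int.floor_lt.2
    push_cast
    have := Int.lt_floor_add_one (t * 2^n)
    rw [pow_succ]
    nlinarith
  unfold bdig; omega

lemma bdig_tsum {t : ℝ} (h0 : 0 ≤ t) (h1 : t < 1) :
    ∑' n, (if bdig t n = 1 then geom n else 0) = t := by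
  set g : ℕ → ℝ := fun N => (⌊t * 2^N⌋ : ℝ) / 2^N with hg
  have hterm : ∀ n, (if bdig t n = 1 then geom n else 0) = g (n+1) - g n := by
    intro n
    have hpow : ∀ k : ℕ, ((2:ℝ)^k) ≠ 0 := fun k => by positivity
    have hstep : ((bdig t n : ℝ)) * geom n = g (n+1) - g n := by
      unfold bdig geom
      push_cast
      rw [hg]
      field_simp
      have e : ((1:ℝ)/2)^n * 2^(n*2) = 2^n := by
        rw [pow_mul, div_pow, one_pow, sq, ← mul_assoc, one_div_mul_cancel (hpow n), one_mul]
      linear_combination ((⌊t * 2 ^ (n+1)⌋ : ℝ) - (⌊t * 2 ^ n⌋ : ℝ) * 2) * e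
    rcases bdig_01 t n with h | h <;> rw [h] at hstep ⊢ <;> simp at hstep <;> simp [hstep]
  have hg0 : g 0 = 0 := by
    have : ⌊t⌋ = 0 := Int.floor_eq_zero_iff.2 ⟨h0, h1⟩
    simp [hg, this]
  have htend : Tendsto g atTop (nhds t) := by
    have hub : ∀ N, g N ≤ t := by
      intro N
      rw [hg]
      rw [div_le_iff₀ (by positivity)]
      exact Int.floor_le (t * 2^N)
    have hlb : ∀ N, t - (2:ℝ)⁻¹^N ≤ g N := by
      intro N
      rw [hg, le_div_iff₀ (by positivity)]
      have := Int.lt_floor_add_one (t * 2^N)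
      have h2 : ((2:ℝ)⁻¹)^N * 2^N = 1 := by
        rw [inv_pow, inv_mul_cancel₀ (by positivity)]
      nlinarith
    refine tendsto_of_tendsto_of_tendsto_of_le_of_le ?_ tendsto_const_nhds hlb hub
    have : Tendsto (fun N : ℕ => (2:ℝ)⁻¹^N) atTop (nhds 0) :=
      tendsto_pow_atTop_nhds_zero_of_lt_one (by norm_num) (by norm_num)
    simpa using tendsto_const_nhds.sub this
  apply tsum_eq_of_partial
  · intro n; split_ifs; exacts [(geom_pos n).le, le_rfl]
  · have : (fun N => ∑ n ∈ range N, (if bdig t n = 1 then geom n else 0))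
        = fun N => g N - g 0 := by
      funext N
      rw [← Finset.sum_range_sub g N]
      exact Finset.sum_congr rfl (fun n _ => hterm n)
    rw [this, hg0]
    simpa using htend

/-- The two structures agree on all binary pairs. -/
lemma pair_agree {X : Type} (m : X → X → X) (hm : IsMidpoint m) (hc : Cancellative m)
    (S S' : SuperconvexStr X)
    (hS : ∀ x y : X, S.pair (1 / 2) x y = m x y)
    (hS' : ∀ x y : X, S'.pair (1 / 2) x y = m x y)
    {t : ℝ} (h0 : 0 ≤ t) (h1 : t ≤ 1) (x y : X) :
    S.pair t x y = S'.pair t x y := by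
  rcases eq_or_lt_of_le h1 with heq | hlt
  · subst heq
    have hw : IsWeight (pw 1) := pw_weight (by norm_num) (by norm_num)
    have h1' : ∀ T : SuperconvexStr X, T.pair 1 x y = x := by
      intro T
      exact T.proj (pw 1) hw 0 (by simp [pw]) (fun i hi => by
        unfold pw; rw [if_neg hi]; split_ifs <;> norm_num) _
    rw [h1' S, h1' S']
  · set f : ℕ → ℕ := fun n => if bdig t n = 1 then 0 else 1 with hf
    have hsummand0 : (fun n => if 0 = f n then geom n else 0)
        = fun n => if bdig t n = 1 then geom n else 0 := by
      funext n
      rcases bdig_01 t n with h | h <;> simp [hf, h]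
    have hpush0 : push f geom 0 = t := by
      unfold push
      rw [hsummand0]
      exact bdig_tsum h0 hlt
    have hpush1 : push f geom 1 = 1 - t := by
      unfold push
      have hs0 : Summable (fun n => if 0 = f n then geom n else 0) :=
        Summable.of_nonneg_of_le (fun n => by split_ifs; exacts [(geom_pos n).le, le_rfl])
          (fun n => by split_ifs; exacts [le_rfl, (geom_pos n).le]) geom_summable
      have hh0 : HasSum (fun n => if 0 = f n then geom n else 0) t := by
        have := hs0.hasSum
        rwa [show ∑' n, (if 0 = f n then geom n else 0) = t from by
          rw [hsummand0]; exact bdig_tsum h0 hlt] at this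
      have hhg : HasSum geom 1 := by
        have := geom_summable.hasSum
        rwa [geom_weight.2] at this
      have hsub := hhg.sub hh0
      have heq : (fun n => geom n - (if 0 = f n then geom n else 0))
          = fun n => if 1 = f n then geom n else 0 := by
        funext n
        rcases bdig_01 t n with h | h <;> simp [hf, h]
      rw [heq] at hsub
      exact hsub.tsum_eq
    have hpushk : ∀ k, push f geom (k + 2) = 0 := by
      intro k
      unfold push
      rw [show (fun j => if k + 2 = f j then geom j else 0) = fun _ => (0:ℝ) from
        funext fun j => by
          rw [if_neg (show ¬ k + 2 = f j by
            have : f j = 0 ∨ f j = 1 := by rw [hf]; dsimp only; split_ifs <;> simp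
            omega)]]
      exact tsum_zero
    have hpw : push f geom = pw t := by
      funext k
      rcases k with _ | _ | k
      · rw [hpush0]; rfl
      · rw [hpush1]; rfl
      · rw [hpushk k]; rfl
    have key : ∀ T : SuperconvexStr X,
        T.pair t x y = T.comb geom (fun j => (fun i : ℕ => if i = 0 then x else y) (f j)) := by
      intro T
      rw [pair_eq_comb, ← hpw, ← comb_push T geom_weight f]
    rw [key S, key S', geom_agree m hm hc S S' hS hS']

/-- normalized shift of a weight. -/
noncomputable def shiftw (ν : ℕ → ℝ) : ℕ → ℝ := fun j => ν (j + 1) / (1 - ν 0)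

lemma shiftw_weight {ν : ℕ → ℝ} (hν : IsWeight ν) (ht : ν 0 < 1) : IsWeight (shiftw ν) := by
  have hc0 : (0:ℝ) < 1 - ν 0 := by linarith
  constructor
  · intro j; exact div_nonneg (hν.1 (j + 1)) hc0.le
  · have hs := weight_summable hν
    have htail : ∑' j, ν (j + 1) = 1 - ν 0 := by
      have := Summable.tsum_eq_zero_add hs
      rw [hν.2] at this
      linarith
    unfold shiftw
    rw [tsum_div_const, htail, div_self (ne_of_gt hc0)]

/-- Peeling the first coordinate off a combination. -/
lemma comb_peel {X : Type} (S : SuperconvexStr X) {ν : ℕ → ℝ} (hν : IsWeight ν)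
    (ht : ν 0 < 1) (x : ℕ → X) :
    S.comb ν x = S.pair (ν 0) (x 0) (S.comb (shiftw ν) (fun j => x (j + 1))) := by
  have hc0 : (0:ℝ) < 1 - ν 0 := by linarith
  have hν' := shiftw_weight hν ht
  set η : ℕ → ℝ := fun k => if k = 0 then 0 else ν k / (1 - ν 0) with hηdef
  have hη_push : η = push (fun j => j + 1) (shiftw ν) := by
    funext k
    unfold push
    rcases k with _ | n
    · rw [show (fun j => if 0 = j + 1 then shiftw ν j else 0) = fun _ => (0:ℝ) from
        funext fun j => by rw [if_neg (by omega)]]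
      rw [tsum_zero]; simp [hηdef]
    · rw [show (fun j => if n + 1 = j + 1 then shiftw ν j else 0)
          = fun j => if j = n then shiftw ν j else 0 from funext fun j => by
        by_cases h : j = n
        · simp [h]
        · rw [if_neg (by omega), if_neg h]]
      rw [tsum_ite_eq' n (shiftw ν)]
      simp [hηdef, shiftw]
  have hη_w : IsWeight η := hη_push ▸ push_weight hν' _
  have hrows : ∀ i : ℕ, IsWeight (if i = 0 then dirac 0 else η) := by
    intro i; split_ifs; exacts [dirac_weight 0, hη_w]
  have hcomp := S.compos (pw (ν 0)) (pw_weight (hν.1 0) ht.le)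
    (fun i => if i = 0 then dirac 0 else η) hrows x
  have hseq : (fun i => S.comb (if i = 0 then dirac 0 else η) x)
      = fun i => if i = 0 then x 0 else S.comb (shiftw ν) (fun j => x (j + 1)) := by
    funext i
    by_cases h : i = 0
    · simp only [h, reduceIte]; exact comb_dirac S 0 x
    · simp only [if_neg h]
      rw [hη_push, ← comb_push S hν' (fun j => j + 1) x]
  have hagg : (fun k => ∑' i, pw (ν 0) i * (if i = 0 then dirac 0 else η) k) = ν := by
    funext k
    rw [tsum_eq_sum (s := {0, 1}) (by
      intro b hb
      simp only [Finset.mem_insert, Finset.mem_singleton] at hb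
      push_neg at hb
      simp [pw, hb.1, hb.2])]
    rw [Finset.sum_pair (by norm_num : (0:ℕ) ≠ 1)]
    rw [if_pos rfl, if_neg (Nat.one_ne_zero)]
    rcases k with _ | n
    · simp [pw, dirac, hηdef]
    · simp only [pw, dirac, hηdef, reduceIte]
      simp only [show n + 1 ≠ 0 by omega, show (1:ℕ) ≠ 0 by omega, if_false, mul_zero, zero_add]
      rw [mul_div_assoc', mul_comm, mul_div_assoc, div_self (ne_of_gt hc0), mul_one]
  rw [pair_eq_comb, ← hseq, hcomp, hagg]

/-- The two structures agree on finitely supported weights. -/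
lemma fin_agree {X : Type} (m : X → X → X) (hm : IsMidpoint m) (hc : Cancellative m)
    (S S' : SuperconvexStr X)
    (hS : ∀ x y : X, S.pair (1 / 2) x y = m x y)
    (hS' : ∀ x y : X, S'.pair (1 / 2) x y = m x y) :
    ∀ n (ν : ℕ → ℝ), IsWeight ν → (∀ j, n ≤ j → ν j = 0) → ∀ x : ℕ → X,
      S.comb ν x = S'.comb ν x := by
  intro n
  induction n with
  | zero =>
    intro ν hν hz x
    exfalso
    have : ν = fun _ => 0 := funext fun j => hz j (Nat.zero_le j)
    rw [this] at hν
    have := hν.2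
    rw [tsum_zero] at this
    norm_num at this
  | succ n IH =>
    intro ν hν hz x
    have hs := weight_summable hν
    have ht1 : ν 0 ≤ 1 := by
      rw [← hν.2]
      exact Summable.le_tsum hs 0 (fun j _ => hν.1 j)
    rcases eq_or_lt_of_le ht1 with heq | hlt
    · have htail : ∑' j, ν (j + 1) = 0 := by
        have := Summable.tsum_eq_zero_add hs
        rw [hν.2, heq] at this
        linarith
      have hall : ∀ i, i ≠ 0 → ν i = 0 := by
        intro i hi
        rcases i with _ | j
        · exact absurd rfl hi
        · have hst : Summable (fun j => ν (j + 1)) := (summable_nat_add_iff 1).2 hs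
          have hle := Summable.le_tsum hst j (fun i _ => hν.1 (i + 1))
          have := hν.1 (j + 1)
          rw [htail] at hle
          linarith
      rw [S.proj ν hν 0 heq hall, S'.proj ν hν 0 heq hall]
    · rw [comb_peel S hν hlt, comb_peel S' hν hlt]
      rw [pair_agree m hm hc S S' hS hS' (hν.1 0) ht1]
      congr 1
      have hz' : ∀ j, n ≤ j → shiftw ν j = 0 := by
        intro j hj
        unfold shiftw
        rw [hz (j + 1) (by omega), zero_div]
      exact IH (shiftw ν) (shiftw_weight hν hlt) hz' _

end AuxSup

namespace AuxSup

lemma min_sub_min_mono {a b x y : ℝ} (hab : a ≤ b) (hxy : x ≤ y) :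
    min x b - min x a ≤ min y b - min y a := by
  simp only [min_def]; split_ifs <;> linarith

end AuxSup

open AuxSup in
theorem at_most_one_superconvex_extension' (X : Type) (m : X → X → X)
    (hm : IsMidpoint m) (hc : Cancellative m)
    (S S' : SuperconvexStr X)
    (hS : ∀ x y : X, S.pair (1 / 2) x y = m x y)
    (hS' : ∀ x y : X, S'.pair (1 / 2) x y = m x y) :
    ∀ lam, IsWeight lam → ∀ x : ℕ → X, S.comb lam x = S'.comb lam x := by
  intro lam hlam x
  have hs : Summable lam := weight_summable hlam
  set F : ℕ → ℝ := fun j => ∑ i ∈ range j, lam i with hF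
  have hFmono : Monotone F := by
    intro i j hij
    exact Finset.sum_le_sum_of_subset_of_nonneg (Finset.range_subset_range.2 hij)
      (fun k _ _ => hlam.1 k)
  have hF0 : F 0 = 0 := by simp [hF]
  have hF1 : ∀ j, F j ≤ 1 := by
    intro j
    rw [← hlam.2]
    exact Summable.sum_le_tsum (range j) (fun i _ => hlam.1 i) hs
  have hF0' : ∀ j, 0 ≤ F j := fun j => Finset.sum_nonneg (fun i _ => hlam.1 i)
  have hFtend : Tendsto F atTop (nhds 1) := by
    have := hs.hasSum.tendsto_sum_nat
    rwa [hlam.2] at this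
  set a : ℕ → ℝ := fun k => 1 - (2:ℝ)⁻¹ ^ k with ha
  have ha0 : ∀ k, 0 ≤ a k := by
    intro k
    have : (2:ℝ)⁻¹ ^ k ≤ 1 := pow_le_one₀ (by norm_num) (by norm_num)
    rw [ha]; dsimp only; linarith
  have ha1 : ∀ k, a k < 1 := by
    intro k
    have : (0:ℝ) < (2:ℝ)⁻¹ ^ k := by positivity
    rw [ha]; dsimp only; linarith
  have hamono : ∀ k, a k ≤ a (k + 1) := by
    intro k
    have : (2:ℝ)⁻¹ ^ (k+1) ≤ (2:ℝ)⁻¹ ^ k :=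
      pow_le_pow_of_le_one (by norm_num) (by norm_num) (by omega)
    rw [ha]; dsimp only; linarith
  have hagap : ∀ k, a (k + 1) - a k = (2:ℝ)⁻¹ ^ (k + 1) := by
    intro k
    simp only [ha, pow_succ]
    ring
  have hatend : Tendsto a atTop (nhds 1) := by
    have : Tendsto (fun K : ℕ => (2:ℝ)⁻¹ ^ K) atTop (nhds 0) :=
      tendsto_pow_atTop_nhds_zero_of_lt_one (by norm_num) (by norm_num)
    simpa [ha] using tendsto_const_nhds.sub this
  set ρ : ℕ → ℕ → ℝ := fun k j => 2 ^ (k + 1) *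
    ((min (F (j+1)) (a (k+1)) - min (F (j+1)) (a k))
      - (min (F j) (a (k+1)) - min (F j) (a k))) with hρ
  have hρ_nonneg : ∀ k j, 0 ≤ ρ k j := by
    intro k j
    have h1 := min_sub_min_mono (hamono k) (hFmono (Nat.le_succ j))
    have h2 : (0:ℝ) < 2 ^ (k+1) := by positivity
    rw [hρ]
    dsimp only
    nlinarith
  have hρ_w : ∀ k, IsWeight (ρ k) := by
    intro k
    refine ⟨hρ_nonneg k, ?_⟩
    apply tsum_eq_of_partial (hρ_nonneg k)
    have hps : ∀ N, ∑ j ∈ range N, ρ k j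
        = 2 ^ (k+1) * (min (F N) (a (k+1)) - min (F N) (a k)) := by
      intro N
      rw [← Finset.mul_sum]
      congr 1
      rw [Finset.sum_range_sub (fun j => min (F j) (a (k+1)) - min (F j) (a k)) N]
      rw [hF0, min_eq_left (ha0 (k+1)), min_eq_left (ha0 k)]
      ring
    rw [show (fun N => ∑ j ∈ range N, ρ k j)
        = fun N => 2 ^ (k+1) * (min (F N) (a (k+1)) - min (F N) (a k)) from funext hps]
    have hmt : Tendsto (fun N => min (F N) (a (k+1)) - min (F N) (a k)) atTop
        (nhds ((2:ℝ)⁻¹ ^ (k+1))) := by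
      have h1 : Tendsto (fun N => min (F N) (a (k+1))) atTop (nhds (a (k+1))) := by
        have := hFtend.min (tendsto_const_nhds (x := a (k+1)))
        rwa [min_eq_right (ha1 (k+1)).le] at this
      have h2 : Tendsto (fun N => min (F N) (a k)) atTop (nhds (a k)) := by
        have := hFtend.min (tendsto_const_nhds (x := a k))
        rwa [min_eq_right (ha1 k).le] at this
      have := h1.sub h2
      rwa [hagap k] at this
    have := hmt.const_mul ((2:ℝ) ^ (k+1))
    rw [show (2:ℝ) ^ (k+1) * (2:ℝ)⁻¹ ^ (k+1) = 1 by
      rw [← mul_pow]; norm_num] at this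
    exact this
  have hρ_fin : ∀ k, ∃ J, ∀ j, J ≤ j → ρ k j = 0 := by
    intro k
    have hev : ∀ᶠ j in atTop, a (k+1) ≤ F j :=
      Filter.Tendsto.eventually_const_le (ha1 (k+1)) hFtend
    obtain ⟨J, hJ⟩ := eventually_atTop.1 hev
    refine ⟨J, fun j hj => ?_⟩
    have h1 : a (k+1) ≤ F j := hJ j hj
    have h2 : a (k+1) ≤ F (j+1) := le_trans h1 (hFmono (Nat.le_succ j))
    have h1' : a k ≤ F j := le_trans (hamono k) h1
    have h2' : a k ≤ F (j+1) := le_trans (hamono k) h2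
    rw [hρ]
    dsimp only
    rw [min_eq_right h2, min_eq_right h2', min_eq_right h1, min_eq_right h1']
    ring
  have hdecomp : ∀ j, ∑' k, geom k * ρ k j = lam j := by
    intro j
    have hterm : ∀ k, geom k * ρ k j
        = (min (F (j+1)) (a (k+1)) - min (F j) (a (k+1)))
          - (min (F (j+1)) (a k) - min (F j) (a k)) := by
      intro k
      rw [hρ]
      dsimp only
      unfold geom
      rw [← mul_assoc, show ((2:ℝ)⁻¹) ^ (k+1) * (2:ℝ) ^ (k+1) = 1 by
        rw [← mul_pow]; norm_num, one_mul]
      ring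
    apply tsum_eq_of_partial
    · intro k
      exact mul_nonneg (geom_pos k).le (hρ_nonneg k j)
    · have hps : ∀ K, ∑ k ∈ range K, geom k * ρ k j
          = (min (F (j+1)) (a K) - min (F j) (a K)) := by
        intro K
        rw [Finset.sum_congr rfl (fun k _ => hterm k)]
        rw [Finset.sum_range_sub (fun k => min (F (j+1)) (a k) - min (F j) (a k)) K]
        have ha00 : a 0 = 0 := by simp [ha]
        rw [ha00, min_eq_right (hF0' (j+1)), min_eq_right (hF0' j)]
        ring
      rw [show (fun K => ∑ k ∈ range K, geom k * ρ k j)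
          = fun K => (min (F (j+1)) (a K) - min (F j) (a K)) from funext hps]
      have h1 : Tendsto (fun K => min (F (j+1)) (a K)) atTop (nhds (F (j+1))) := by
        have := (tendsto_const_nhds (x := F (j+1))).min hatend
        rwa [min_eq_left (hF1 (j+1))] at this
      have h2 : Tendsto (fun K => min (F j) (a K)) atTop (nhds (F j)) := by
        have := (tendsto_const_nhds (x := F j)).min hatend
        rwa [min_eq_left (hF1 j)] at this
      have h3 := h1.sub h2
      rwa [show F (j+1) - F j = lam j by
        rw [hF]; dsimp only; rw [Finset.sum_range_succ]; ring] at h3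
  have hfin : ∀ k, S.comb (ρ k) x = S'.comb (ρ k) x := by
    intro k
    obtain ⟨J, hJ⟩ := hρ_fin k
    exact fin_agree m hm hc S S' hS hS' J (ρ k) (hρ_w k) hJ x
  have hcS := S.compos geom geom_weight ρ hρ_w x
  have hcS' := S'.compos geom geom_weight ρ hρ_w x
  calc S.comb lam x
      = S.comb (fun j => ∑' k, geom k * ρ k j) x := by
        congr 1; funext j; exact (hdecomp j).symm
    _ = S.comb geom (fun k => S.comb (ρ k) x) := hcS.symm
    _ = S.comb geom (fun k => S'.comb (ρ k) x) := by
        congr 1; funext k; exact hfin k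
    _ = S'.comb geom (fun k => S'.comb (ρ k) x) :=
        geom_agree m hm hc S S' hS hS' _
    _ = S'.comb (fun j => ∑' k, geom k * ρ k j) x := hcS'
    _ = S'.comb lam x := by
        congr 1; funext j; exact hdecomp j

/-- A cancellative midpoint set admits at most one superconvex structure whose
binary ½-½ combination is the midpoint operation: any two such structures agree
on every superconvex combination. -/
theorem at_most_one_superconvex_extension (X : Type) (m : X → X → X)
    (hm : IsMidpoint m) (hc : Cancellative m)
    (S S' : SuperconvexStr X)
    (hS : ∀ x y : X, S.pair (1 / 2) x y = m x y)
    (hS' : ∀ x y : X, S'.pair (1 / 2) x y = m x y) :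
    ∀ lam, IsWeight lam → ∀ x : ℕ → X, S.comb lam x = S'.comb lam x := by
  exact at_most_one_superconvex_extension' X m hm hc S S' hS hS'
end

section
/- Let I be a set and λ : I → [0,1] a function with Σ_{i∈I} λᵢ = 1 (so the support of λ is countable). Then there exist functions ρ, μ : I → [0,1] such that: ρ takes dyadic rational values and has finite support with Σ_{i∈I} ρᵢ = 1; Σ_{i∈I} μᵢ = 1; and λᵢ = ½ρᵢ + ½μᵢ for all i ∈ I. -/
set_option maxHeartbeats 1000000


/-- Every countable weight function `λ : I → [0,1]` with total sum 1 splits as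
`λ = ½ρ + ½μ` where `ρ` is a finitely supported dyadic weight function and
`μ` is a weight function. -/
theorem weight_dyadic_split (I : Type) (lam : I → ℝ)
    (h0 : ∀ i, 0 ≤ lam i) (h1 : ∀ i, lam i ≤ 1)
    (hsum : ∑' i, lam i = 1) :
    ∃ rho mu : I → ℝ,
      (∀ i, 0 ≤ rho i ∧ rho i ≤ 1) ∧
      (∀ i, ∃ (a : ℤ) (n : ℕ), rho i = (a : ℝ) / 2 ^ n) ∧
      (Function.support rho).Finite ∧
      (∑' i, rho i) = 1 ∧
      (∀ i, 0 ≤ mu i ∧ mu i ≤ 1) ∧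
      (∑' i, mu i) = 1 ∧
      ∀ i, lam i = rho i / 2 + mu i / 2 := by
  classical
  have hlam : Summable lam := by
    by_contra h
    rw [tsum_eq_zero_of_not_summable h] at hsum
    norm_num at hsum
  -- there is an index with positive weight
  obtain ⟨j, hj⟩ : ∃ j, 0 < lam j := by
    by_contra h
    push_neg at h
    have hz : ∀ i, lam i = 0 := fun i => le_antisymm (h i) (h0 i)
    simp [hz] at hsum
  -- a maximal weight index i₀
  have hfin : {i | lam j ≤ lam i}.Finite := by
    have h2 : ∀ᶠ i in Filter.cofinite, lam i < lam j :=
      hlam.tendsto_cofinite_zero.eventually_lt_const hj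
    exact (Filter.eventually_cofinite.mp h2).subset (by
      intro i hi hlt; exact absurd hi (not_le.mpr hlt))
  obtain ⟨i0, hi0F, hi0max'⟩ := Finset.exists_max_image hfin.toFinset lam
    ⟨j, hfin.mem_toFinset.mpr (le_refl (lam j))⟩
  have hi0pos : 0 < lam i0 := lt_of_lt_of_le hj (by
    simpa using hfin.mem_toFinset.mp hi0F)
  have hi0max : ∀ i, lam i ≤ lam i0 := by
    intro i
    by_cases h : lam j ≤ lam i
    · exact hi0max' i (hfin.mem_toFinset.mpr h)
    · exact (not_le.mp h).le.trans (hfin.mem_toFinset.mp hi0F)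
  -- every other index has weight ≤ 1/2
  have hhalf : ∀ i, i ≠ i0 → lam i ≤ 1 / 2 := by
    intro i hi
    have hpair : lam i + lam i0 ≤ 1 := by
      have := hlam.sum_le_tsum ({i, i0} : Finset I) (fun k _ => h0 k)
      rwa [Finset.sum_pair hi, hsum] at this
    linarith [hi0max i]
  -- a finite set S containing most of the mass, and containing i₀
  obtain ⟨S₀, hS₀⟩ : ∃ S : Finset I, 1 - lam i0 / 2 < ∑ i ∈ S, lam i := by
    have hts : Filter.Tendsto (fun s : Finset I => ∑ i ∈ s, lam i)
        Filter.atTop (nhds 1) := by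
      have h' := hlam.hasSum
      rw [HasSum] at h'
      rwa [hsum] at h'
    exact (hts.eventually_const_lt (by linarith : 1 - lam i0 / 2 < 1)).exists
  set S : Finset I := insert i0 S₀ with hS
  have hi0S : i0 ∈ S := Finset.mem_insert_self _ _
  have hSsum_gt : 1 - lam i0 / 2 < ∑ i ∈ S, lam i :=
    lt_of_lt_of_le hS₀ (Finset.sum_le_sum_of_subset_of_nonneg
      (Finset.subset_insert _ _) (fun k _ _ => h0 k))
  have hSsum_le : ∑ i ∈ S, lam i ≤ 1 := by
    rw [← hsum]; exact hlam.sum_le_tsum S (fun k _ => h0 k)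
  -- choose n with S.card / 2^n < lam i0 / 2
  obtain ⟨n, hn⟩ : ∃ n : ℕ, ((S.card : ℝ) * 2 / lam i0) < 2 ^ n :=
    pow_unbounded_of_one_lt _ one_lt_two
  have h2n : (0:ℝ) < 2 ^ n := by positivity
  have hcard : (S.card : ℝ) / 2 ^ n < lam i0 / 2 := by
    rw [div_lt_div_iff₀ h2n (by norm_num : (0:ℝ) < 2)]
    have h' := (div_lt_iff₀ hi0pos).mp hn
    nlinarith [h']
  -- the dyadic approximations
  set A : I → ℤ := fun i => ⌊2 ^ n * lam i⌋ with hA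
  set d : I → ℝ := fun i => (A i : ℝ) / 2 ^ n with hd
  have hd_le : ∀ i, d i ≤ lam i := by
    intro i
    rw [hd]
    rw [div_le_iff₀ h2n, mul_comm]
    exact Int.floor_le (2 ^ n * lam i)
  have hd_gt : ∀ i, lam i - 1 / 2 ^ n < d i := by
    intro i
    rw [hd]
    rw [sub_lt_iff_lt_add, ← add_div, lt_div_iff₀ h2n]
    have := Int.lt_floor_add_one (2 ^ n * lam i)
    push_cast
    linarith [this]
  have hd0 : ∀ i, 0 ≤ d i := by
    intro i
    apply div_nonneg _ h2n.le
    rw [hA]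
    exact_mod_cast Int.floor_nonneg.mpr (mul_nonneg h2n.le (h0 i))
  set s : ℝ := ∑ i ∈ S, d i with hs
  have hs_le : s ≤ 1 := le_trans (Finset.sum_le_sum (fun k _ => hd_le k)) hSsum_le
  have hs_gt : 1 - lam i0 < s := by
    have h1' : ∑ i ∈ S, (lam i - 1 / 2 ^ n) < s :=
      Finset.sum_lt_sum_of_nonempty ⟨i0, hi0S⟩ (fun k _ => hd_gt k)
    rw [Finset.sum_sub_distrib, Finset.sum_const, nsmul_eq_mul] at h1'
    have : (S.card : ℝ) * (1 / 2 ^ n) = (S.card : ℝ) / 2 ^ n := by ring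
    rw [this] at h1'
    linarith [hcard, hSsum_gt]
  -- definitions of rho and mu
  set rho : I → ℝ := fun i =>
    (if i ∈ S then d i else 0) + (if i = i0 then 1 - s else 0) with hrho
  set mu : I → ℝ := fun i => 2 * lam i - rho i with hmu
  have hrho_supp : ∀ i ∉ S, rho i = 0 := by
    intro i hi
    have : i ≠ i0 := fun h => hi (h ▸ hi0S)
    simp [hrho, hi, this]
  -- key values
  have hrho_mem : ∀ i ∈ S, i ≠ i0 → rho i = d i := by
    intro i hi hne; simp [hrho, hi, hne]
  have hrho_i0 : rho i0 = d i0 + (1 - s) := by simp [hrho, hi0S]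
  have hrho_i0_eq : rho i0 = 1 - ∑ i ∈ S.erase i0, d i := by
    rw [hrho_i0]
    have := Finset.add_sum_erase S d hi0S
    rw [hs]
    linarith [this]
  have herase_le : ∑ i ∈ S.erase i0, d i ≤ 1 - lam i0 := by
    have h1' : ∑ i ∈ S.erase i0, d i ≤ ∑ i ∈ S.erase i0, lam i :=
      Finset.sum_le_sum (fun k _ => hd_le k)
    have h2' : lam i0 + ∑ i ∈ S.erase i0, lam i = ∑ i ∈ S, lam i :=
      Finset.add_sum_erase S lam hi0S
    linarith [hSsum_le]
  have herase_nonneg : 0 ≤ ∑ i ∈ S.erase i0, d i :=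
    Finset.sum_nonneg (fun k _ => hd0 k)
  have hrho_i0_ge : lam i0 ≤ rho i0 := by rw [hrho_i0_eq]; linarith
  have hrho_i0_le1 : rho i0 ≤ 1 := by rw [hrho_i0_eq]; linarith
  have hrho_i0_le : rho i0 ≤ 2 * lam i0 := by
    rw [hrho_i0]
    have := hd_le i0
    linarith [hs_gt]
  -- bounds on rho
  have hrho_bounds : ∀ i, 0 ≤ rho i ∧ rho i ≤ 1 := by
    intro i
    by_cases hi : i = i0
    · subst hi
      constructor
      · linarith [hrho_i0_ge, hi0pos]
      · exact hrho_i0_le1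
    by_cases hiS : i ∈ S
    · rw [hrho_mem i hiS hi]
      exact ⟨hd0 i, (hd_le i).trans (h1 i)⟩
    · rw [hrho_supp i hiS]; norm_num
  refine ⟨rho, mu, hrho_bounds, ?_, ?_, ?_, ?_, ?_, ?_⟩
  · -- dyadic values
    intro i
    by_cases hi : i = i0
    · subst hi
      refine ⟨A i + 2 ^ n - ∑ k ∈ S, A k, n, ?_⟩
      have hsA : (∑ k ∈ S, d k) = ((∑ k ∈ S, A k : ℤ) : ℝ) / 2 ^ n := by
        rw [hd]
        push_cast [Finset.sum_div]
        rfl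
      rw [hrho_i0, hd, hs, hsA]
      push_cast
      field_simp
      ring
    by_cases hiS : i ∈ S
    · exact ⟨A i, n, hrho_mem i hiS hi⟩
    · exact ⟨0, 0, by rw [hrho_supp i hiS]; norm_num⟩
  · -- finite support
    exact Set.Finite.subset S.finite_toSet (by
      intro i hi
      by_contra hiS
      exact hi (hrho_supp i hiS))
  · -- sum of rho
    rw [tsum_eq_sum hrho_supp]
    rw [hrho]
    rw [Finset.sum_add_distrib]
    rw [Finset.sum_ite_eq' S i0 (fun _ => 1 - s)]
    simp only [hi0S, if_true]
    rw [Finset.sum_ite_mem, Finset.inter_self]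
    rw [← hs]; ring
  · -- bounds on mu
    intro i
    rw [hmu]
    simp only
    by_cases hi : i = i0
    · subst hi
      constructor
      · linarith [hrho_i0_le]
      · linarith [hrho_i0_ge, h1 i]
    constructor
    · by_cases hiS : i ∈ S
      · rw [hrho_mem i hiS hi]; linarith [hd_le i, h0 i]
      · rw [hrho_supp i hiS]; linarith [h0 i]
    · have := hhalf i hi
      linarith [(hrho_bounds i).1]
  · -- sum of mu
    have hrhosum : Summable rho := summable_of_ne_finset_zero hrho_supp
    have h2lam : Summable (fun i => 2 * lam i) := hlam.mul_left 2
    rw [hmu]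
    rw [h2lam.tsum_sub hrhosum, tsum_mul_left, hsum,
      tsum_eq_sum hrho_supp]
    have : ∑ i ∈ S, rho i = 1 := by
      rw [hrho, Finset.sum_add_distrib,
        Finset.sum_ite_eq' S i0 (fun _ => 1 - s)]
      simp only [hi0S, if_true]
      rw [Finset.sum_ite_mem, Finset.inter_self, ← hs]; ring
    rw [this]; norm_num
  · intro i; rw [hmu]; ring
end

section
/- Let n ∈ ℕ and let A ⊆ ℝⁿ be a nonempty subset closed under the average operation x ⊕ y = (x+y)/2, endowed with the subspace Euclidean topology. Then (A, ⊕) is a midpoint-convex body in the category of topological spaces if and only if A is a bounded convex subset of ℝⁿ. -/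
set_option maxHeartbeats 1600000

open Filter Topology Module Set

/-- Iterativity in the category of topological spaces. -/
def TopIterative {A : Type} [TopologicalSpace A] (m : A → A → A) : Prop :=
  ∀ (X : Type) [TopologicalSpace X], ∀ c : X → A × X, Continuous c →
    ∃! u : X → A, Continuous u ∧ ∀ x, u x = m (c x).1 (u (c x).2)


theorem sconv_aux (d : ℕ) : ∀ {E : Type} [NormedAddCommGroup E] [NormedSpace ℝ E]
    [FiniteDimensional ℝ E], finrank ℝ E ≤ d →
    ∀ (A : Set E), Convex ℝ A → ∀ (a : ℕ → E), (∀ k, a k ∈ A) →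
    ∀ (R : ℝ), (∀ k, ‖a k‖ ≤ R) → ∀ (l : ℕ → ℝ), (∀ k, 0 < l k) → HasSum l 1 →
    ∀ (z : E), HasSum (fun k => l k • a k) z → z ∈ A := by
  induction d with
  | zero =>
    intro E _ _ _ hr A hA a ha R hR l hl hl1 z hz
    have : Subsingleton E := finrank_zero_iff.1 (Nat.le_zero.1 hr)
    have := ha 0
    rwa [Subsingleton.elim (a 0) z] at this
  | succ d ih =>
    intro E _ _ _ hr A hA a ha R hR l hl hl1 z hz
    by_cases hspan : affineSpan ℝ (Set.range a) = ⊤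
    · -- full-dimensional case
      haveI : CompleteSpace E := FiniteDimensional.complete ℝ E
      set T := convexHull ℝ (Set.range a) with hT
      have hTA : T ⊆ A := convexHull_min (Set.range_subset_iff.2 ha) hA
      have hTc : Convex ℝ T := convex_convexHull ℝ _
      have haT : ∀ k, a k ∈ T := fun k => subset_convexHull ℝ _ ⟨k, rfl⟩
      -- span of differences is everything
      have hvs : Submodule.span ℝ (Set.range (fun k => a k - a 0)) = ⊤ := by
        have h2 : (affineSpan ℝ (Set.range a)).direction = ⊤ := by
          rw [hspan]; exact AffineSubspace.direction_top ℝ _ _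
        rw [direction_affineSpan,
          vectorSpan_eq_span_vsub_set_right ℝ (Set.mem_range_self 0)] at h2
        rw [← h2]
        congr 1
        ext v
        constructor
        · rintro ⟨k, rfl⟩; exact ⟨a k, ⟨k, rfl⟩, rfl⟩
        · rintro ⟨w, ⟨k, rfl⟩, rfl⟩; exact ⟨k, rfl⟩
      -- find a finite stage spanning everything
      have hstage : ∃ N, Submodule.span ℝ ((fun k => a k - a 0) '' Set.Iio N) = ⊤ := by
        set W : ℕ → Submodule ℝ E := fun N => Submodule.span ℝ ((fun k => a k - a 0) '' Set.Iio N)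
          with hW
        have hmono : Monotone W := fun i j hij =>
          Submodule.span_mono (Set.image_mono (fun x hx => lt_of_lt_of_le hx hij))
        have hdir : Directed (· ≤ ·) W := hmono.directed_le
        have hsup : ⨆ N, W N = ⊤ := by
          rw [hW]
          rw [← Submodule.span_iUnion]
          rw [← hvs]
          congr 1
          ext v
          simp only [Set.mem_iUnion, Set.mem_image, Set.mem_Iio, Set.mem_range]
          constructor
          · rintro ⟨N, k, _, rfl⟩; exact ⟨k, rfl⟩
          · rintro ⟨k, rfl⟩; exact ⟨k + 1, k, Nat.lt_succ_self k, rfl⟩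
        have hx : ∀ x : E, ∃ N, x ∈ W N := fun x =>
          (Submodule.mem_iSup_of_directed W hdir).1 (by rw [hsup]; trivial)
        choose f hf using hx
        obtain ⟨s, hs⟩ := (Module.finite_def.mp inferInstance : (⊤ : Submodule ℝ E).FG)
        refine ⟨s.sup f, le_antisymm le_top ?_⟩
        rw [← hs, Submodule.span_le]
        intro x hxs
        exact hmono (Finset.le_sup hxs) (hf x)
      obtain ⟨N0, hN0⟩ := hstage
      set N := N0 + 1 with hNdef
      have hN : Submodule.span ℝ ((fun k => a k - a 0) '' Set.Iio N) = ⊤ :=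
        le_antisymm le_top (by
          rw [← hN0]
          exact Submodule.span_mono (Set.image_mono (fun x hx => lt_of_lt_of_le hx (Nat.le_succ N0))))
      set sN := ∑ k ∈ Finset.range N, l k with hsN
      have hsNpos : 0 < sN := Finset.sum_pos (fun k _ => hl k) ⟨0, by simp [hNdef]⟩
      have hsN1 : sN < 1 := by
        have h2 : ∑ k ∈ Finset.range (N + 1), l k ≤ 1 := by
          have := Summable.sum_le_tsum (Finset.range (N + 1)) (fun k _ => (hl k).le) hl1.summable
          rwa [hl1.tsum_eq] at this
        rw [Finset.sum_range_succ] at h2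
        have := hl N
        linarith
      have h1sN : (0:ℝ) < 1 - sN := by linarith
      set w := sN⁻¹ • ∑ k ∈ Finset.range N, l k • a k with hw
      -- the linear map onto E
      set vv : Fin N → E := fun j => a j - a 0 with hvv
      set L0 := Fintype.linearCombination ℝ vv with hL0
      have hrange : LinearMap.range L0 = ⊤ := by
        rw [hL0, Fintype.range_linearCombination, ← hN]
        congr 1
        ext x
        simp only [Set.mem_range, Set.mem_image, Set.mem_Iio, hvv]
        constructor
        · rintro ⟨j, rfl⟩; exact ⟨j, j.2, rfl⟩
        · rintro ⟨k, hk, rfl⟩; exact ⟨⟨k, hk⟩, rfl⟩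
      set L := LinearMap.toContinuousLinearMap L0 with hL
      have hLsurj : Function.Surjective L := by
        have : LinearMap.range L0 = ⊤ := hrange
        intro y
        have : y ∈ LinearMap.range L0 := by rw [hrange]; trivial
        obtain ⟨t, ht⟩ := this
        exact ⟨t, ht⟩
      have hopenL : IsOpenMap (fun t : Fin N → ℝ => w + L t) := by
        have h1 : IsOpenMap (L : (Fin N → ℝ) → E) := L.isOpenMap hLsurj
        exact (Homeomorph.addLeft w).isOpenMap.comp h1
      -- the min of weights
      have hrne : (Finset.range N).Nonempty := ⟨0, by simp [hNdef]⟩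
      set mm := (Finset.range N).inf' hrne l with hmm
      have hmmpos : 0 < mm := by
        rw [hmm, Finset.lt_inf'_iff]
        exact fun k _ => hl k
      have hmmle : ∀ k ∈ Finset.range N, mm ≤ l k := fun k hk => Finset.inf'_le l hk
      set δ := mm / (sN * (N + 1)) with hδ
      have hδpos : 0 < δ := by
        apply div_pos hmmpos
        positivity
      -- membership of perturbed combinations
      have hball : ∀ t : Fin N → ℝ, ‖t‖ < δ → w + L t ∈ T := by
        intro t ht
        set c : Fin N → ℝ := fun j => l j / sN + t j - (if j = 0 then (∑ i, t i) else 0) with hc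
        have hcsum : ∑ j, c j = 1 := by
          rw [hc]
          rw [Finset.sum_sub_distrib, Finset.sum_add_distrib]
          rw [Finset.sum_ite_eq' Finset.univ (0 : Fin N) (fun _ => ∑ i, t i)]
          simp only [Finset.mem_univ, if_true]
          have h3 : ∑ j : Fin N, l ↑j / sN = 1 := by
            rw [← Finset.sum_div, Fin.sum_univ_eq_sum_range, ← hsN, div_self (ne_of_gt hsNpos)]
          rw [h3]
          ring
        have hcnonneg : ∀ j : Fin N, 0 ≤ c j := by
          intro j
          have h4 : |t j| ≤ ‖t‖ := by
            have := norm_le_pi_norm t j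
            simpa using this
          have h5 : |∑ i, t i| ≤ N * ‖t‖ := by
            calc |∑ i, t i| ≤ ∑ i, |t i| := Finset.abs_sum_le_sum_abs _ _
            _ ≤ ∑ _i : Fin N, ‖t‖ := Finset.sum_le_sum (fun i _ => by
                have := norm_le_pi_norm t i; simpa using this)
            _ = N * ‖t‖ := by simp [Finset.sum_const, Finset.card_univ, mul_comm]
          have h6 : mm / sN ≤ l ↑j / sN := by
            gcongr
            exact hmmle _ (Finset.mem_range.2 j.2)
          have h7 : ((N : ℝ) + 1) * ‖t‖ < mm / sN := by
            have h8 : ((N : ℝ) + 1) * ‖t‖ < ((N : ℝ) + 1) * δ := by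
              apply mul_lt_mul_of_pos_left ht
              positivity
            have h9 : ((N : ℝ) + 1) * δ = mm / sN := by
              rw [hδ]
              field_simp
            linarith
          rw [hc]
          simp only
          have habs : |t j| + |∑ i, t i| ≤ ((N:ℝ) + 1) * ‖t‖ := by
            have : (0:ℝ) ≤ ‖t‖ := norm_nonneg t
            nlinarith
          have h10 : -(((N:ℝ)+1) * ‖t‖) ≤ t j - (if j = 0 then (∑ i, t i) else 0) := by
            have ha4 := abs_le.1 h4
            have ha5 := abs_le.1 h5
            have hnn : (0:ℝ) ≤ ‖t‖ := norm_nonneg t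
            by_cases hj : j = 0
            · simp only [hj, if_true]
              have e0 : t (0 : Fin N) = t j := by rw [hj]
              rw [← hj]
              linarith [ha4.1, ha5.2, e0]
            · simp only [hj, if_false]
              have hN0' : (0:ℝ) ≤ (N:ℝ) * ‖t‖ := by positivity
              linarith [ha4.1]
          linarith
        -- the combination identity
        have hLt : (L t : E) = ∑ j, t j • (a ↑j - a 0) := by
          rw [hL]
          rw [LinearMap.coe_toContinuousLinearMap']
          rw [hL0, Fintype.linearCombination_apply]
        have hwsum : w = ∑ j : Fin N, (l ↑j / sN) • a ↑j := by
          rw [hw, Finset.smul_sum]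
          rw [← Fin.sum_univ_eq_sum_range (fun k => sN⁻¹ • (l k • a k)) N]
          congr 1
          funext j
          rw [smul_smul, div_eq_inv_mul]
        have hcombo : w + L t = ∑ j, c j • a ↑j := by
          have hterm : ∀ j : Fin N, c j • a ↑j
              = (l ↑j / sN) • a ↑j + t j • a ↑j - (if j = 0 then (∑ i, t i) • a ↑j else 0) := by
            intro j
            rw [hc]
            simp only
            rw [sub_smul, add_smul, ite_smul, zero_smul]
          rw [Finset.sum_congr rfl (fun j _ => hterm j)]
          rw [Finset.sum_sub_distrib, Finset.sum_add_distrib]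
          rw [Finset.sum_ite_eq' Finset.univ (0 : Fin N) (fun j => (∑ i, t i) • a ↑j)]
          simp only [Finset.mem_univ, if_true]
          rw [← hwsum, hLt]
          have : ∑ j : Fin N, t j • (a ↑j - a 0) = ∑ j : Fin N, t j • a ↑j - (∑ i, t i) • a 0 := by
            rw [Finset.sum_smul]
            rw [← Finset.sum_sub_distrib]
            congr 1
            funext j
            rw [smul_sub]
          rw [this]
          abel
        rw [hcombo]
        exact hTc.sum_mem (fun j _ => hcnonneg j) hcsum (fun j _ => haT ↑j)
      -- w is interior
      have hwInt : w ∈ interior T := by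
        have himg : (fun t : Fin N → ℝ => w + L t) '' Metric.ball 0 δ ⊆ T := by
          rintro x ⟨t, htb, rfl⟩
          exact hball t (by simpa [Metric.mem_ball, dist_zero_right] using htb)
        exact interior_maximal himg (hopenL _ Metric.isOpen_ball)
          ⟨0, Metric.mem_ball_self hδpos, by simp⟩
      -- the tail point is in the closure
      set P := ∑ k ∈ Finset.range N, l k • a k with hP
      have tailsum : HasSum (fun k => l (k + N) • a (k + N)) (z - P) := by
        refine (hasSum_nat_add_iff (f := fun k => l k • a k) N).2 ?_
        rw [← hP, sub_add_cancel]
        exact hz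
      have masstail : HasSum (fun k => l (k + N)) (1 - sN) := by
        refine (hasSum_nat_add_iff (f := l) N).2 ?_
        rw [← hsN, sub_add_cancel]
        exact hl1
      set v2 := (1 - sN)⁻¹ • (z - P) with hv2def
      have hv2 : v2 ∈ closure T := by
        set σ : ℕ → ℝ := fun m => ∑ k ∈ Finset.range m, (1 - sN)⁻¹ * l (k + N) with hσ
        have hσle : ∀ m, σ m ≤ 1 := by
          intro m
          have h11 : ∑ k ∈ Finset.range m, l (k + N) ≤ 1 - sN := by
            have := Summable.sum_le_tsum (Finset.range m) (fun k _ => (hl (k + N)).le) masstail.summable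
            rwa [masstail.tsum_eq] at this
          rw [hσ]
          simp only
          rw [← Finset.mul_sum]
          calc (1 - sN)⁻¹ * ∑ k ∈ Finset.range m, l (k + N) ≤ (1 - sN)⁻¹ * (1 - sN) := by
                apply mul_le_mul_of_nonneg_left h11 (by positivity)
          _ = 1 := inv_mul_cancel₀ (ne_of_gt h1sN)
        set q : ℕ → E := fun m =>
          (∑ k ∈ Finset.range m, ((1 - sN)⁻¹ * l (k + N)) • a (k + N)) + (1 - σ m) • a 0 with hqdef
        have hq : ∀ m, q m ∈ T := by
          intro m
          have : q m = ∑ k ∈ Finset.range (m + 1),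
              (if k < m then (1 - sN)⁻¹ * l (k + N) else 1 - σ m) •
                (if k < m then a (k + N) else a 0) := by
            rw [Finset.sum_range_succ]
            simp only [lt_irrefl, if_false]
            rw [hqdef]
            simp only
            congr 1
            apply Finset.sum_congr rfl
            intro k hk
            rw [if_pos (Finset.mem_range.1 hk), if_pos (Finset.mem_range.1 hk)]
          rw [this]
          apply hTc.sum_mem
          · intro k _
            by_cases hk : k < m
            · rw [if_pos hk]
              have := hl (k + N)
              positivity
            · rw [if_neg hk]
              linarith [hσle m]
          · rw [Finset.sum_range_succ]
            simp only [lt_irrefl, if_false]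
            rw [Finset.sum_congr rfl (fun k hk => if_pos (Finset.mem_range.1 hk))]
            have hσm : σ m = ∑ k ∈ Finset.range m, (1 - sN)⁻¹ * l (k + N) := by rw [hσ]
            rw [← hσm]
            ring
          · intro k _
            by_cases hk : k < m
            · rw [if_pos hk]; exact haT _
            · rw [if_neg hk]; exact haT 0
        have hqtend : Tendsto q atTop (𝓝 v2) := by
          have h12 : HasSum (fun k => ((1 - sN)⁻¹ * l (k + N)) • a (k + N)) v2 := by
            have h13 := tailsum.const_smul ((1 - sN)⁻¹)
            have h13' : HasSum (fun k => ((1 - sN)⁻¹ * l (k + N)) • a (k + N))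
                ((1 - sN)⁻¹ • (z - P)) := by
              refine HasSum.congr_fun h13 ?_ -- maybe wrong name; fix below
              intro k
              rw [smul_smul]
            rw [← hv2def] at h13'
            exact h13'
          have h14 := h12.tendsto_sum_nat
          have hσtend : Tendsto σ atTop (𝓝 1) := by
            have h15 : HasSum (fun k => (1 - sN)⁻¹ * l (k + N)) 1 := by
              have := masstail.const_smul ((1 - sN)⁻¹)
              have he : (1 - sN)⁻¹ • (1 - sN) = (1 : ℝ) := by
                rw [smul_eq_mul, inv_mul_cancel₀ (ne_of_gt h1sN)]
              rw [he] at this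
              exact this
            have := h15.tendsto_sum_nat
            rw [hσ]
            exact this
          have h16 : Tendsto (fun m => (1 - σ m) • a 0) atTop (𝓝 (0 : E)) := by
            have h17 : Tendsto (fun m => 1 - σ m) atTop (𝓝 (0 : ℝ)) := by
              have := (tendsto_const_nhds (x := (1:ℝ))).sub hσtend
              simpa using this
            have := h17.smul_const (a 0)
            simpa using this
          have h18 := h14.add h16
          rw [add_zero] at h18
          rw [hqdef]
          exact h18
        exact mem_closure_of_tendsto hqtend (Filter.Eventually.of_forall hq)
      have hzcombo : sN • w + (1 - sN) • v2 = z := by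
        rw [hw, hv2def, smul_inv_smul₀ (ne_of_gt hsNpos), smul_inv_smul₀ (ne_of_gt h1sN), hP]
        abel
      have := hTc.combo_interior_closure_mem_interior hwInt hv2 hsNpos h1sN.le (by ring)
      rw [hzcombo] at this
      exact hTA (interior_subset this)
    · -- restrict to a proper affine subspace
      have hVne : vectorSpan ℝ (Set.range a) ≠ ⊤ := by
        intro h
        exact hspan ((AffineSubspace.direction_eq_top_iff_of_nonempty
          ((affineSpan_nonempty ℝ).2 (Set.range_nonempty a))).1 (by rw [direction_affineSpan]; exact h))
      set V := vectorSpan ℝ (Set.range a) with hV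
      have hfr : finrank ℝ V ≤ d := by
        have := Submodule.finrank_lt (K := ℝ) (V := E) hVne
        omega
      set b : ℕ → V := fun k => ⟨a k - a 0,
        vsub_mem_vectorSpan ℝ ⟨k, rfl⟩ ⟨0, rfl⟩⟩ with hb
      set A' : Set V := (fun v : V => (v : E) + a 0) ⁻¹' A with hA'def
      have hA' : Convex ℝ A' := by
        intro x hx y hy s t hs ht hst
        have key : ((s • x + t • y : V) : E) + a 0
            = s • ((x : E) + a 0) + t • ((y : E) + a 0) := by
          have h1 : a 0 = (s + t) • a 0 := by rw [hst, one_smul]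
          push_cast
          nth_rewrite 1 [h1]
          module
        have hmem := hA hx hy hs ht hst
        rw [hA'def, Set.mem_preimage]
        show ((s • x + t • y : V) : E) + a 0 ∈ A
        rw [key]
        exact hmem
      have hbA' : ∀ k, b k ∈ A' := by
        intro k
        simp only [A', hb, Set.mem_preimage]
        simpa [sub_add_cancel] using ha k
      have h0 : HasSum (fun k => l k • (a k - a 0)) (z - a 0) := by
        have h1 : HasSum (fun k => l k • a 0) ((1 : ℝ) • a 0) := hl1.smul_const (a 0)
        have := hz.sub h1
        simpa [smul_sub] using this
      have zmem : z - a 0 ∈ V := by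
        have hmem : ∀ s : Finset ℕ, ∑ k ∈ s, l k • (a k - a 0) ∈ V := fun s =>
          Submodule.sum_mem _ fun k _ => Submodule.smul_mem _ _
            (vsub_mem_vectorSpan ℝ ⟨k, rfl⟩ ⟨0, rfl⟩)
        exact (Submodule.closed_of_finiteDimensional V).mem_of_tendsto h0
          (Filter.Eventually.of_forall hmem)
      have hbsum : HasSum (fun k => l k • b k) (⟨z - a 0, zmem⟩ : V) := by
        rw [HasSum, Topology.IsInducing.tendsto_nhds_iff Topology.IsInducing.subtypeVal]
        have : (fun s : Finset ℕ => ((∑ k ∈ s, l k • b k : V) : E))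
            = fun s : Finset ℕ => ∑ k ∈ s, l k • (a k - a 0) := by
          funext s
          push_cast [hb]
          rfl
        rw [HasSum] at h0
        simpa only [Function.comp_def, this] using h0
      have hmem := ih hfr A' hA' b hbA' (R + ‖a 0‖)
        (fun k => by
          show ‖a k - a 0‖ ≤ R + ‖a 0‖
          calc ‖a k - a 0‖ ≤ ‖a k‖ + ‖a 0‖ := norm_sub_le _ _
          _ ≤ R + ‖a 0‖ := by linarith [hR k])
        l hl hl1 _ hbsum
      simpa [A', sub_add_cancel] using hmem

/-- iterates of the second component -/
def iterC {A X : Type} (c : X → A × X) : ℕ → X → X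
  | 0, x => x
  | k + 1, x => iterC c k ((c x).2)

lemma iterC_succ_eq {A X : Type} (c : X → A × X) :
    ∀ (k : ℕ) (x : X), iterC c (k + 1) x = (c (iterC c k x)).2 := by
  intro k
  induction k with
  | zero => intro x; rfl
  | succ k ih =>
    intro x
    show iterC c (k + 1) ((c x).2) = _
    rw [ih ((c x).2)]
    rfl

lemma iterC_continuous {A X : Type} [TopologicalSpace A] [TopologicalSpace X]
    (c : X → A × X) (hc : Continuous c) : ∀ k, Continuous (iterC c k) := by
  intro k
  induction k with
  | zero => exact continuous_id
  | succ k ih => exact ih.comp (continuous_snd.comp hc)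

-- the geometric weights
lemma geom_half_pos : ∀ k : ℕ, (0:ℝ) < (2⁻¹) ^ (k + 1) := fun k => by positivity

lemma geom_half_hasSum : HasSum (fun k : ℕ => ((2:ℝ)⁻¹) ^ (k + 1)) 1 := by
  have h := hasSum_geometric_two' 1
  refine HasSum.congr_fun h ?_
  intro k
  rw [pow_succ, one_div, div_eq_mul_inv, inv_pow]
  ring

lemma geom_half_sum (m : ℕ) :
    ∑ j ∈ Finset.range m, ((2:ℝ)⁻¹) ^ (j + 1) = 1 - (2⁻¹) ^ m := by
  induction m with
  | zero => simp
  | succ m ih => rw [Finset.sum_range_succ, ih]; ring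

lemma hmidE {n : ℕ} (a b : Fin n → ℝ) :
    midpoint ℝ a b = (2:ℝ)⁻¹ • a + (2:ℝ)⁻¹ • b := by
  rw [midpoint_eq_smul_add, invOf_eq_inv, smul_add]

theorem backward_iter (n : ℕ) (A : Set (Fin n → ℝ))
    (mA : A → A → A) (hm : ∀ x y : A, (mA x y : Fin n → ℝ) = midpoint ℝ x.1 y.1)
    (hb : Bornology.IsBounded A) (hconv : Convex ℝ A) : TopIterative mA := by
  obtain ⟨R, hR⟩ := isBounded_iff_forall_norm_le.1 hb
  intro X _ c hc
  set l : ℕ → ℝ := fun k => (2⁻¹) ^ (k + 1) with hl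
  set aa : ℕ → X → (Fin n → ℝ) := fun k x => ((c (iterC c k x)).1 : Fin n → ℝ) with haa
  have haamem : ∀ k x, aa k x ∈ A := fun k x => ((c (iterC c k x)).1).2
  have haanorm : ∀ k x, ‖aa k x‖ ≤ R := fun k x => hR _ (haamem k x)
  have hlR : Summable (fun k => l k * R) := geom_half_hasSum.summable.mul_right R
  have hlnorm : ∀ k (x : X), ‖l k • aa k x‖ ≤ l k * R := by
    intro k x
    rw [norm_smul, Real.norm_eq_abs, abs_of_pos (geom_half_pos k)]
    exact mul_le_mul_of_nonneg_left (haanorm k x) (geom_half_pos k).le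
  have hsummable : ∀ x, Summable (fun k => l k • aa k x) := fun x =>
    Summable.of_norm_bounded hlR (fun k => hlnorm k x)
  set u0 : X → (Fin n → ℝ) := fun x => ∑' k, l k • aa k x with hu0
  have hu0mem : ∀ x, u0 x ∈ A := fun x =>
    sconv_aux (finrank ℝ (Fin n → ℝ)) le_rfl A hconv (fun k => aa k x)
      (fun k => haamem k x) R (fun k => haanorm k x) l (fun k => geom_half_pos k)
      geom_half_hasSum (u0 x) (hsummable x).hasSum
  set u : X → A := fun x => ⟨u0 x, hu0mem x⟩ with hu
  have hshift : ∀ (x : X) (k : ℕ), aa k ((c x).2) = aa (k + 1) x := fun x k => rfl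
  -- the fixed point identity
  have hfix0 : ∀ x, u0 x = midpoint ℝ (aa 0 x) (u0 ((c x).2)) := by
    intro x
    have h1 : u0 x = l 0 • aa 0 x + ∑' k, l (k + 1) • aa (k + 1) x := by
      rw [hu0]
      exact Summable.tsum_eq_zero_add (hsummable x)
    have hs2 : Summable (fun k => l k • aa (k + 1) x) := by
      have := hsummable ((c x).2)
      simpa only [hshift x] using this
    have h2 : ∑' k, l (k + 1) • aa (k + 1) x = (2:ℝ)⁻¹ • ∑' k, l k • aa (k + 1) x := by
      rw [← Summable.tsum_const_smul ((2:ℝ)⁻¹) hs2]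
      congr 1
      funext k
      rw [smul_smul]
      congr 1
      rw [hl]
      ring
    have h3 : ∑' k, l k • aa (k + 1) x = u0 ((c x).2) := by
      rw [hu0]
      congr 1
    rw [hmidE, h1, h2, h3]
    congr 1
    rw [hl]
    norm_num
  -- continuity
  have haacont : ∀ k, Continuous (aa k) := fun k =>
    continuous_subtype_val.comp (continuous_fst.comp (hc.comp (iterC_continuous c hc k)))
  have hparts : ∀ N : ℕ, Continuous (fun x => ∑ k ∈ Finset.range N, l k • aa k x) :=
    fun N => continuous_finset_sum _ (fun k _ => (haacont k).const_smul (l k))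
  have htu : TendstoUniformly (fun (N : ℕ) x => ∑ k ∈ Finset.range N, l k • aa k x) u0 atTop := by
    rw [Metric.tendstoUniformly_iff]
    intro ε hε
    have h0 : Tendsto (fun N : ℕ => ((2:ℝ)⁻¹) ^ N * (|R| + 1)) atTop (𝓝 0) := by
      have := (tendsto_pow_atTop_nhds_zero_of_lt_one (by norm_num : (0:ℝ) ≤ 2⁻¹)
        (by norm_num : (2:ℝ)⁻¹ < 1)).mul_const (|R| + 1)
      simpa using this
    filter_upwards [h0.eventually (gt_mem_nhds hε)] with N hN x
    rw [dist_eq_norm]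
    have htailmass : HasSum (fun k => l (k + N)) (((2:ℝ)⁻¹) ^ N) := by
      refine (hasSum_nat_add_iff (f := l) N).2 ?_
      rw [geom_half_sum]
      have he : ((2:ℝ)⁻¹) ^ N + (1 - (2⁻¹) ^ N) = 1 := by ring
      rw [he]
      exact geom_half_hasSum
    have htail : HasSum (fun k => l (k + N) • aa (k + N) x)
        (u0 x - ∑ k ∈ Finset.range N, l k • aa k x) := by
      refine (hasSum_nat_add_iff (f := fun k => l k • aa k x) N).2 ?_
      rw [sub_add_cancel]
      exact (hsummable x).hasSum
    have hnorm : ‖u0 x - ∑ k ∈ Finset.range N, l k • aa k x‖ ≤ ((2:ℝ)⁻¹) ^ N * R := by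
      rw [← htail.tsum_eq]
      refine le_trans (norm_tsum_le_tsum_norm ?_) ?_
      · exact Summable.of_nonneg_of_le (fun k => norm_nonneg _) (fun k => hlnorm (k + N) x)
          ((htailmass.summable).mul_right R)
      · calc ∑' k, ‖l (k + N) • aa (k + N) x‖ ≤ ∑' k, l (k + N) * R :=
              Summable.tsum_le_tsum (h := fun k => hlnorm (k + N) x)
                (Summable.of_nonneg_of_le (fun k => norm_nonneg _)
                  (fun k => hlnorm (k + N) x) ((htailmass.summable).mul_right R))
                ((htailmass.summable).mul_right R)
        _ = ((2:ℝ)⁻¹) ^ N * R := by rw [(htailmass.mul_right R).tsum_eq]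
    have hRabs : ((2:ℝ)⁻¹) ^ N * R ≤ ((2:ℝ)⁻¹) ^ N * (|R| + 1) := by
      apply mul_le_mul_of_nonneg_left _ (by positivity)
      have := le_abs_self R
      linarith
    linarith
  have hu0cont : Continuous u0 := htu.continuous (Eventually.of_forall hparts).frequently
  have hucont : Continuous u := hu0cont.subtype_mk _
  refine ⟨u, ⟨hucont, ?_⟩, ?_⟩
  · intro x
    apply Subtype.ext
    rw [hm]
    exact hfix0 x
  · rintro v ⟨-, hvfix⟩
    have hdiff : ∀ (m : ℕ) (x : X), ‖(v x : Fin n → ℝ) - u0 x‖ ≤ ((2:ℝ)⁻¹) ^ m * (2 * R) := by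
      intro m
      induction m with
      | zero =>
        intro x
        calc ‖(v x : Fin n → ℝ) - u0 x‖ ≤ ‖(v x : Fin n → ℝ)‖ + ‖u0 x‖ := norm_sub_le _ _
        _ ≤ R + R := add_le_add (hR _ (v x).2) (hR _ (hu0mem x))
        _ = ((2:ℝ)⁻¹) ^ 0 * (2 * R) := by ring
      | succ m ih =>
        intro x
        have hvx : (v x : Fin n → ℝ) = midpoint ℝ (aa 0 x) ((v ((c x).2) : Fin n → ℝ)) := by
          rw [hvfix x, hm]
          rfl
        have hd : (v x : Fin n → ℝ) - u0 x
            = (2:ℝ)⁻¹ • ((v ((c x).2) : Fin n → ℝ) - u0 ((c x).2)) := by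
          rw [hvx, hfix0 x, hmidE, hmidE]
          module
        rw [hd, norm_smul, Real.norm_eq_abs]
        have h5 : |(2:ℝ)⁻¹| = 2⁻¹ := by norm_num
        rw [h5]
        calc (2:ℝ)⁻¹ * ‖(v ((c x).2) : Fin n → ℝ) - u0 ((c x).2)‖
            ≤ (2:ℝ)⁻¹ * (((2:ℝ)⁻¹) ^ m * (2 * R)) := by
              apply mul_le_mul_of_nonneg_left (ih _) (by norm_num)
        _ = ((2:ℝ)⁻¹) ^ (m + 1) * (2 * R) := by ring
    funext x
    apply Subtype.ext
    have hle : ‖(v x : Fin n → ℝ) - u0 x‖ ≤ 0 := by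
      have htz : Tendsto (fun m : ℕ => ((2:ℝ)⁻¹) ^ m * (2 * R)) atTop (𝓝 0) := by
        have := (tendsto_pow_atTop_nhds_zero_of_lt_one (by norm_num : (0:ℝ) ≤ 2⁻¹)
          (by norm_num : (2:ℝ)⁻¹ < 1)).mul_const (2 * R)
        simpa using this
      exact ge_of_tendsto htz (Eventually.of_forall (fun m => hdiff m x))
    have := norm_le_zero_iff.1 hle
    have := sub_eq_zero.1 this
    exact this

theorem shiftM {n : ℕ} {A : Set (Fin n → ℝ)} (M : (ℕ → A) → A)
    (hfix : ∀ s : ℕ → A, (M s : Fin n → ℝ)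
      = midpoint ℝ (s 0 : Fin n → ℝ) (M (fun k => s (k + 1)) : Fin n → ℝ)) :
    ∀ (m : ℕ) (s : ℕ → A), (M s : Fin n → ℝ)
      = ∑ k ∈ Finset.range m, ((2:ℝ)⁻¹) ^ (k + 1) • (s k : Fin n → ℝ)
        + ((2:ℝ)⁻¹) ^ m • (M (fun k => s (k + m)) : Fin n → ℝ) := by
  intro m
  induction m with
  | zero =>
    intro s
    have he : (fun k => s (k + 0)) = s := by funext k; rw [Nat.add_zero]
    rw [he]
    simp
  | succ m ih =>
    intro s
    have h1 := hfix (fun k => s (k + m))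
    have he0 : (0 : ℕ) + m = m := Nat.zero_add m
    have he1 : (fun k => s (k + 1 + m)) = fun k => s (k + (m + 1)) := by
      funext k
      congr 1
      omega
    rw [he0, he1] at h1
    rw [ih s, h1, hmidE, Finset.sum_range_succ]
    module

theorem forward_parts (n : ℕ) (A : Set (Fin n → ℝ)) (hne : A.Nonempty)
    (mA : A → A → A) (hm : ∀ x y : A, (mA x y : Fin n → ℝ) = midpoint ℝ x.1 y.1)
    (hIter : TopIterative mA) : Bornology.IsBounded A ∧ Convex ℝ A := by
  classical
  -- the infinite midpoint operator
  have hcX : Continuous (fun s : ℕ → A => ((s 0, fun k => s (k + 1)) : A × (ℕ → A))) :=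
    (continuous_apply 0).prodMk (continuous_pi fun k => continuous_apply (k + 1))
  obtain ⟨M, ⟨hMc, hMfix0⟩, -⟩ := hIter (ℕ → A) _ hcX
  have hMfix : ∀ s : ℕ → A, (M s : Fin n → ℝ)
      = midpoint ℝ (s 0 : Fin n → ℝ) (M (fun k => s (k + 1)) : Fin n → ℝ) := by
    intro s
    rw [hMfix0 s, hm]
  obtain ⟨p, hp⟩ := hne
  set P : A := ⟨p, hp⟩ with hP
  set cP : ℕ → A := fun _ => P with hcP
  have hMp : (M cP : Fin n → ℝ) = p := by
    have h := hMfix cP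
    exact ((midpoint_eq_right_iff ℝ).1 h.symm).symm
  -- boundedness
  have hbdd : Bornology.IsBounded A := by
    by_contra hb
    rw [isBounded_iff_forall_norm_le] at hb
    push_neg at hb
    have hM1 : M ⁻¹' (Metric.ball (M cP) 1) ∈ 𝓝 cP :=
      (hMc.continuousAt).preimage_mem_nhds (Metric.ball_mem_nhds _ one_pos)
    obtain ⟨V, hVsub, hVopen, hVmem⟩ := mem_nhds_iff.1 hM1
    obtain ⟨I, uu, huu, hpi⟩ := isOpen_pi_iff.1 hVopen cP hVmem
    set k := I.sup id + 1 with hk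
    have hknotI : k ∉ I := by
      intro h
      have := Finset.le_sup (f := id) h
      simp only [id] at this
      omega
    obtain ⟨q, hq, hqnorm⟩ := hb (‖p‖ + 2 ^ (k + 1))
    set Q : A := ⟨q, hq⟩ with hQ
    set s : ℕ → A := fun j => if j = k then Q else P with hs
    have hsV : s ∈ V := by
      apply hpi
      intro i hi
      have hik : i ≠ k := fun h => hknotI (h ▸ hi)
      have : s i = cP i := by rw [hs]; simp [hik]; rfl
      rw [this]
      exact (huu i hi).2
    have hsball := hVsub hsV
    -- compute M s
    have hform := shiftM M hMfix (k + 1) s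
    have hshift2 : (fun j => s (j + (k + 1))) = cP := by
      funext j
      rw [hs, hcP]
      simp only
      rw [if_neg (by omega)]
    rw [hshift2, hMp] at hform
    have hpre : ∑ j ∈ Finset.range (k + 1), ((2:ℝ)⁻¹) ^ (j + 1) • (s j : Fin n → ℝ)
        = (1 - ((2:ℝ)⁻¹) ^ k) • p + ((2:ℝ)⁻¹) ^ (k + 1) • q := by
      rw [Finset.sum_range_succ]
      have hsk : (s k : Fin n → ℝ) = q := by rw [hs]; simp; rfl
      have hsj : ∀ j ∈ Finset.range k, ((2:ℝ)⁻¹) ^ (j + 1) • (s j : Fin n → ℝ)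
          = ((2:ℝ)⁻¹) ^ (j + 1) • p := by
        intro j hj
        have : j ≠ k := by have := Finset.mem_range.1 hj; omega
        rw [hs]
        simp [this]
        rfl
      rw [Finset.sum_congr rfl hsj, hsk, ← Finset.sum_smul, geom_half_sum]
    rw [hpre] at hform
    have hdiff : (M s : Fin n → ℝ) - p = ((2:ℝ)⁻¹) ^ (k + 1) • (q - p) := by
      rw [hform]
      module
    have hdist : dist (M s) (M cP) < 1 := hsball
    rw [Subtype.dist_eq, hMp, dist_eq_norm, hdiff, norm_smul, Real.norm_eq_abs,
      abs_of_pos (by positivity : (0:ℝ) < ((2:ℝ)⁻¹) ^ (k + 1))] at hdist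
    have hqp : (2:ℝ) ^ (k + 1) < ‖q - p‖ := by
      have h1 : ‖q‖ - ‖p‖ ≤ ‖q - p‖ := by
        have := norm_sub_norm_le q p
        linarith [abs_le.1 (abs_norm_sub_norm_le q p)]
      linarith
    have h2 : ((2:ℝ)⁻¹) ^ (k + 1) * (2:ℝ) ^ (k + 1) = 1 := by
      rw [← mul_pow]
      norm_num
    nlinarith [pow_pos (by norm_num : (0:ℝ) < 2⁻¹) (k + 1)]
  refine ⟨hbdd, ?_⟩
  -- convexity
  obtain ⟨R, hR⟩ := isBounded_iff_forall_norm_le.1 hbdd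
  intro x hx y hy sc t hsc ht hst
  -- binary expansion of t
  set r : ℕ → ℝ := fun k =>
    Nat.rec t (fun _ rk => if (2:ℝ)⁻¹ ≤ rk then 2 * rk - 1 else 2 * rk) k with hrdef
  have hr0 : r 0 = t := rfl
  have hrsucc : ∀ k, r (k + 1) = if (2:ℝ)⁻¹ ≤ r k then 2 * r k - 1 else 2 * r k :=
    fun k => rfl
  have hrbound : ∀ k, 0 ≤ r k ∧ r k ≤ 1 := by
    intro k
    induction k with
    | zero => exact ⟨ht, by linarith⟩
    | succ k ih =>
      rw [hrsucc k]
      by_cases h : (2:ℝ)⁻¹ ≤ r k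
      · rw [if_pos h]; constructor <;> linarith [ih.1, ih.2]
      · rw [if_neg h]; push_neg at h; constructor <;> linarith [ih.1]
  set ss : ℕ → A := fun k => if (2:ℝ)⁻¹ ≤ r k then ⟨y, hy⟩ else ⟨x, hx⟩ with hss
  set g : ℕ → ℝ := fun m => t - ((2:ℝ)⁻¹) ^ m * r m with hg
  set h : ℕ → ℝ := fun m => 1 - ((2:ℝ)⁻¹) ^ m - g m with hh
  have hf : ∀ m, ∑ k ∈ Finset.range m, ((2:ℝ)⁻¹) ^ (k + 1) • (ss k : Fin n → ℝ)
      = g m • y + h m • x := by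
    intro m
    induction m with
    | zero => simp [hg, hh, hr0]
    | succ m ih =>
      rw [Finset.sum_range_succ, ih]
      have hgm : g (m + 1) • y + h (m + 1) • x
          = (g m • y + h m • x) + ((g (m+1) - g m) • y + (h (m+1) - h m) • x) := by
        module
      rw [hgm]
      congr 1
      have hpow : ((2:ℝ)⁻¹) ^ (m + 1) = ((2:ℝ)⁻¹) ^ m * 2⁻¹ := pow_succ _ _
      by_cases hc2 : (2:ℝ)⁻¹ ≤ r m
      · have hssm : (ss m : Fin n → ℝ) = y := by rw [hss]; simp [hc2]
        have hr1 : r (m + 1) = 2 * r m - 1 := by rw [hrsucc m, if_pos hc2]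
        have hg1 : g (m + 1) - g m = ((2:ℝ)⁻¹) ^ (m + 1) := by
          simp only [hg, hr1]
          ring
        have hh1 : h (m + 1) - h m = 0 := by
          simp only [hh, hg, hr1]
          ring
        rw [hssm, hg1, hh1, zero_smul, add_zero]
      · have hssm : (ss m : Fin n → ℝ) = x := by rw [hss]; simp [hc2]
        have hr1 : r (m + 1) = 2 * r m := by rw [hrsucc m, if_neg hc2]
        have hg1 : g (m + 1) - g m = 0 := by
          simp only [hg, hr1]
          ring
        have hh1 : h (m + 1) - h m = ((2:ℝ)⁻¹) ^ (m + 1) := by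
          simp only [hh, hg, hr1]
          ring
        rw [hssm, hg1, hh1, zero_smul, zero_add]
  -- M ss is the limit of the partial combinations
  have hMss := fun m => shiftM M hMfix m ss
  have htends : Tendsto (fun m => ∑ k ∈ Finset.range m, ((2:ℝ)⁻¹) ^ (k + 1) • (ss k : Fin n → ℝ))
      atTop (𝓝 (M ss : Fin n → ℝ)) := by
    have hdiffnorm : ∀ m, ‖(M ss : Fin n → ℝ)
        - ∑ k ∈ Finset.range m, ((2:ℝ)⁻¹) ^ (k + 1) • (ss k : Fin n → ℝ)‖
        ≤ ((2:ℝ)⁻¹) ^ m * R := by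
      intro m
      rw [hMss m]
      have : ∑ k ∈ Finset.range m, ((2:ℝ)⁻¹) ^ (k + 1) • (ss k : Fin n → ℝ)
          + ((2:ℝ)⁻¹) ^ m • (M (fun k => ss (k + m)) : Fin n → ℝ)
          - ∑ k ∈ Finset.range m, ((2:ℝ)⁻¹) ^ (k + 1) • (ss k : Fin n → ℝ)
          = ((2:ℝ)⁻¹) ^ m • (M (fun k => ss (k + m)) : Fin n → ℝ) := by abel
      rw [this, norm_smul, Real.norm_eq_abs, abs_of_pos (by positivity : (0:ℝ) < ((2:ℝ)⁻¹) ^ m)]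
      exact mul_le_mul_of_nonneg_left (hR _ (M (fun k => ss (k + m))).2) (by positivity)
    rw [tendsto_iff_norm_sub_tendsto_zero]
    have hz : Tendsto (fun m : ℕ => ((2:ℝ)⁻¹) ^ m * R) atTop (𝓝 0) := by
      have := (tendsto_pow_atTop_nhds_zero_of_lt_one (by norm_num : (0:ℝ) ≤ 2⁻¹)
        (by norm_num : (2:ℝ)⁻¹ < 1)).mul_const R
      simpa using this
    apply squeeze_zero (fun m => norm_nonneg _) ?_ hz
    intro m
    rw [← norm_neg]
    simp only [neg_sub]
    exact hdiffnorm m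
  have htends2 : Tendsto (fun m => ∑ k ∈ Finset.range m, ((2:ℝ)⁻¹) ^ (k + 1) • (ss k : Fin n → ℝ))
      atTop (𝓝 (t • y + sc • x)) := by
    have hgt : Tendsto g atTop (𝓝 t) := by
      rw [hg]
      have h1 : Tendsto (fun m : ℕ => ((2:ℝ)⁻¹) ^ m * r m) atTop (𝓝 0) := by
        refine squeeze_zero_norm (fun m => ?_)
          (tendsto_pow_atTop_nhds_zero_of_lt_one (by norm_num : (0:ℝ) ≤ 2⁻¹)
            (by norm_num : (2:ℝ)⁻¹ < 1))
        rw [Real.norm_eq_abs, abs_mul, abs_of_pos (by positivity : (0:ℝ) < ((2:ℝ)⁻¹) ^ m)]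
        have hbm := hrbound m
        calc ((2:ℝ)⁻¹) ^ m * |r m| ≤ ((2:ℝ)⁻¹) ^ m * 1 := by
              apply mul_le_mul_of_nonneg_left _ (by positivity)
              rw [abs_of_nonneg hbm.1]; exact hbm.2
        _ = ((2:ℝ)⁻¹) ^ m := by ring
      have := (tendsto_const_nhds (x := t)).sub h1
      simpa using this
    have hht : Tendsto h atTop (𝓝 sc) := by
      rw [hh]
      have h2 : Tendsto (fun m : ℕ => ((2:ℝ)⁻¹) ^ m) atTop (𝓝 (0:ℝ)) :=
        tendsto_pow_atTop_nhds_zero_of_lt_one (by norm_num) (by norm_num)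
      have := ((tendsto_const_nhds (x := (1:ℝ))).sub h2).sub hgt
      have he : (1:ℝ) - 0 - t = sc := by linarith
      rw [he] at this
      exact this
    have := (hgt.smul_const y).add (hht.smul_const x)
    refine Tendsto.congr ?_ this
    intro m
    rw [hf m]
  have heq := tendsto_nhds_unique htends htends2
  have : sc • x + t • y = ((M ss : Fin n → ℝ)) := by rw [heq]; abel
  rw [this]
  exact (M ss).2

/-- A nonempty subset `A ⊆ ℝⁿ` closed under averages, with the subspace
Euclidean topology and the average as midpoint operation, is a
midpoint-convex body in the category of topological spaces if and only if
`A` is bounded and convex. -/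
theorem mconvex_body_in_Top_iff_bounded_convex (n : ℕ) (A : Set (Fin n → ℝ))
    (hne : A.Nonempty)
    (hcl : ∀ x ∈ A, ∀ y ∈ A, midpoint ℝ x y ∈ A) :
    ∀ mA : A → A → A, (∀ x y : A, (mA x y : Fin n → ℝ) = midpoint ℝ x.1 y.1) →
      (((Continuous fun p : A × A => mA p.1 p.2) ∧ IsMidpoint mA ∧
          Cancellative mA ∧ TopIterative mA) ↔
        (Bornology.IsBounded A ∧ Convex ℝ A)) := by
  intro mA hm
  constructor
  · rintro ⟨-, -, -, hIter⟩
    exact forward_parts n A hne mA hm hIter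
  · rintro ⟨hb, hconv⟩
    refine ⟨?_, ⟨?_, ?_, ?_⟩, ?_, backward_iter n A mA hm hb hconv⟩
    · -- continuity of the operation
      have hmemm : ∀ p : A × A, midpoint ℝ (p.1 : Fin n → ℝ) (p.2 : Fin n → ℝ) ∈ A := by
        intro p
        rw [← hm p.1 p.2]
        exact (mA p.1 p.2).2
      have hcmid : Continuous fun p : A × A =>
          midpoint ℝ (p.1 : Fin n → ℝ) (p.2 : Fin n → ℝ) := by
        have h1 : Continuous fun p : A × A => (p.1 : Fin n → ℝ) :=
          continuous_subtype_val.comp continuous_fst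
        have h2 : Continuous fun p : A × A => (p.2 : Fin n → ℝ) :=
          continuous_subtype_val.comp continuous_snd
        have := ((h1.const_smul ((2:ℝ)⁻¹)).add (h2.const_smul ((2:ℝ)⁻¹)))
        refine Continuous.congr this ?_
        intro p
        rw [hmidE]
        rfl
      have heq : (fun p : A × A => mA p.1 p.2) = fun p => (⟨_, hmemm p⟩ : A) :=
        funext fun p => Subtype.ext (hm p.1 p.2)
      rw [heq]
      exact hcmid.subtype_mk _
    · -- idempotency
      intro x
      apply Subtype.ext
      rw [hm]
      exact midpoint_self ℝ (x : Fin n → ℝ)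
    · -- commutativity
      intro x y
      apply Subtype.ext
      rw [hm, hm]
      exact midpoint_comm _ _
    · -- transposition
      intro x y z w
      apply Subtype.ext
      rw [hm, hm, hm, hm, hm, hm]
      simp only [hmidE]
      module
    · -- cancellation
      intro x y z h
      apply Subtype.ext
      have h1 := congrArg (Subtype.val) h
      rw [hm, hm] at h1
      rw [hmidE, hmidE] at h1
      have h2 := add_left_cancel h1
      exact smul_right_injective (Fin n → ℝ) (by norm_num : ((2:ℝ)⁻¹) ≠ 0) h2
end

section
/- (Pataraia's fixed-point theorem) Let X be a nonempty directed-complete partial order, i.e. a nonempty poset in which every nonempty directed subset has a least upper bound. Then every function f : X → X that is monotone (x ≤ y implies f x ≤ f y) and inflationary (x ≤ f x for all x) has a fixed point. -/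
/-- Pataraia's fixed-point theorem: on a nonempty directed-complete partial
order, every monotone inflationary function has a fixed point. -/
theorem pataraia_fixed_point (X : Type*) [PartialOrder X] [Nonempty X]
    (hdc : ∀ D : Set X, D.Nonempty → DirectedOn (· ≤ ·) D → ∃ s, IsLUB D s)
    (f : X → X) (hmono : Monotone f) (hinfl : ∀ x, x ≤ f x) :
    ∃ x, f x = x := by
  obtain ⟨x₀⟩ := ‹Nonempty X›
  obtain ⟨m, -, hm⟩ := zorn_le_nonempty₀ {x | x₀ ≤ x}
    (fun c hcs hc y hy => by
      obtain ⟨s, hs⟩ := hdc c ⟨y, hy⟩ hc.directedOn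
      exact ⟨s, le_trans (hcs hy) (hs.1 hy), fun z hz => hs.1 hz⟩)
    x₀ le_rfl
  exact ⟨m, le_antisymm (hm.2 (le_trans hm.1 (hinfl m)) (hinfl m)) (hinfl m)⟩
end

section
/- (Negation) Let (I, m, e₋, e₊) be an interval set, write o = m(e₋, e₊). Then there exists a unique function neg : I → I satisfying neg(e₊) = e₋, neg(e₋) = e₊, and neg(m(x,y)) = m(neg x, neg y) for all x, y ∈ I. Moreover this function satisfies neg(neg x) = x, neg(o) = o, and m(x, neg x) = o for all x ∈ I. -/
/-- An interval set: a midpoint-convex body `(I, m)` with two points `em, ep`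
that is initial among midpoint-convex bodies with two points. -/
def IsIntervalSet {I : Type} (m : I → I → I) (em ep : I) : Prop :=
  IsMidpoint m ∧ Cancellative m ∧ Iterative m ∧
  ∀ (A : Type) (m' : A → A → A), IsMidpoint m' → Cancellative m' → Iterative m' →
    ∀ x y : A, ∃! h : I → A,
      (∀ u v, h (m u v) = m' (h u) (h v)) ∧ h em = x ∧ h ep = y

/-- Negation on an interval set: there is a unique function swapping the
endpoints and preserving midpoints; it is involutive, fixes the midpoint `o`
of the endpoints, and satisfies `m(x, neg x) = o`. -/
theorem interval_negation (I : Type) (m : I → I → I) (em ep : I)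
    (hI : IsIntervalSet m em ep) :
    (∃! neg : I → I,
      neg ep = em ∧ neg em = ep ∧ ∀ x y, neg (m x y) = m (neg x) (neg y)) ∧
    ∀ neg : I → I,
      (neg ep = em ∧ neg em = ep ∧ ∀ x y, neg (m x y) = m (neg x) (neg y)) →
      (∀ x, neg (neg x) = x) ∧ neg (m em ep) = m em ep ∧
        ∀ x, m x (neg x) = m em ep := by

  obtain ⟨hm, hc, hit, huniv⟩ := hI
  obtain ⟨hidem, hcomm, htr⟩ := hm
  obtain ⟨h, ⟨hhom, hem, hep⟩, huniq⟩ := huniv I m ⟨hidem, hcomm, htr⟩ hc hit ep em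
  constructor
  · refine ⟨h, ⟨hep, hem, hhom⟩, ?_⟩
    rintro g ⟨g1, g2, g3⟩
    exact huniq g ⟨g3, g2, g1⟩
  · rintro neg ⟨n1, n2, n3⟩
    obtain ⟨k, hk, hkuniq⟩ := huniv I m ⟨hidem, hcomm, htr⟩ hc hit em ep
    have hid : (fun x : I => x) = k := hkuniq _ ⟨fun u v => rfl, rfl, rfl⟩
    have hnn : (fun x => neg (neg x)) = k :=
      hkuniq _ ⟨fun u v => by beta_reduce; rw [n3, n3], by beta_reduce; rw [n2, n1], by beta_reduce; rw [n1, n2]⟩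
    have hinv : ∀ x, neg (neg x) = x := fun x =>
      (congrFun hnn x).trans (congrFun hid x).symm
    refine ⟨hinv, by rw [n3, n2, n1, hcomm], ?_⟩
    obtain ⟨k', hk', hk'uniq⟩ :=
      huniv I m ⟨hidem, hcomm, htr⟩ hc hit (m em ep) (m em ep)
    have hconst : (fun _ : I => m em ep) = k' :=
      hk'uniq _ ⟨fun u v => (hidem _).symm, rfl, rfl⟩
    have hg : (fun x => m x (neg x)) = k' :=
      hk'uniq _ ⟨fun u v => by beta_reduce; rw [n3, htr], by beta_reduce; rw [n2], by beta_reduce; rw [n1, hcomm]⟩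
    exact fun x => (congrFun hg x).trans (congrFun hconst x).symm
end

section
/- (Multiplication) Let (I, m, e₋, e₊) be a parametrised interval set, and let neg : I → I be the unique midpoint homomorphism with neg(e₊) = e₋ and neg(e₋) = e₊; write o = m(e₋, e₊). Then there exists a unique function mul : I × I → I satisfying mul(x, e₋) = neg x, mul(x, e₊) = x, and mul(x, m(y,z)) = m(mul(x,y), mul(x,z)) for all x, y, z ∈ I. Moreover mul satisfies mul(x, o) = o, mul(x,y) = mul(y,x), and mul(mul(x,y), z) = mul(x, mul(y,z)) for all x, y, z ∈ I. -/
/-- A parametrised interval set: a midpoint-convex body `(I, m)` with two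
points `em, ep` satisfying the parametrised universal property. -/
def IsParamIntervalSet {I : Type} (m : I → I → I) (em ep : I) : Prop :=
  IsMidpoint m ∧ Cancellative m ∧ Iterative m ∧
  ∀ (P A : Type) (m' : A → A → A), IsMidpoint m' → Cancellative m' → Iterative m' →
    ∀ xm xp : P → A, ∃! h : P → I → A,
      (∀ p, h p em = xm p) ∧ (∀ p, h p ep = xp p) ∧
      ∀ p u v, h p (m u v) = m' (h p u) (h p v)

/-- Multiplication on a parametrised interval set: there is a unique function
`mul` that is a right-homomorphism with `mul x em = neg x` and `mul x ep = x`;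
it absorbs the midpoint `o` of the endpoints, and is commutative and
associative. -/
theorem interval_multiplication (I : Type) (m : I → I → I) (em ep : I)
    (hI : IsParamIntervalSet m em ep)
    (neg : I → I)
    (hneg : neg ep = em ∧ neg em = ep ∧ ∀ x y, neg (m x y) = m (neg x) (neg y)) :
    (∃! mul : I → I → I,
      (∀ x, mul x em = neg x) ∧ (∀ x, mul x ep = x) ∧
      ∀ x y z, mul x (m y z) = m (mul x y) (mul x z)) ∧
    ∀ mul : I → I → I,
      ((∀ x, mul x em = neg x) ∧ (∀ x, mul x ep = x) ∧
        ∀ x y z, mul x (m y z) = m (mul x y) (mul x z)) →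
      (∀ x, mul x (m em ep) = m em ep) ∧ (∀ x y, mul x y = mul y x) ∧
        ∀ x y z, mul (mul x y) z = mul x (mul y z) := by
 
  obtain ⟨⟨hid, hcm, htr⟩, hc, hit, huniv⟩ := hI
  obtain ⟨hnp, hnm, hnh⟩ := hneg
  -- Extensionality from the universal property with trivial parameter
  have ext : ∀ f g : I → I, (∀ u v, f (m u v) = m (f u) (f v)) →
      (∀ u v, g (m u v) = m (g u) (g v)) → f em = g em → f ep = g ep →
      ∀ x, f x = g x := by
    intro f g hf hg h1 h2 x
    obtain ⟨h, -, hu⟩ := huniv PUnit I m ⟨hid, hcm, htr⟩ hc hit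
      (fun _ => f em) (fun _ => f ep)
    have e1 := hu (fun _ => f) ⟨fun _ => rfl, fun _ => rfl, fun _ u v => hf u v⟩
    have e2 := hu (fun _ => g) ⟨fun _ => h1.symm, fun _ => h2.symm, fun _ u v => hg u v⟩
    exact (congrFun (congrFun e1 PUnit.unit) x).trans
      (congrFun (congrFun e2 PUnit.unit) x).symm
  have nn : ∀ x, neg (neg x) = x := by
    intro x
    exact ext (fun y => neg (neg y)) (fun y => y)
      (fun u v => by beta_reduce; rw [hnh, hnh]) (fun u v => rfl)
      (by beta_reduce; rw [hnm, hnp]) (by beta_reduce; rw [hnp, hnm]) x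
  have mo : ∀ x, m x (neg x) = m em ep := by
    intro x
    exact ext (fun y => m y (neg y)) (fun _ => m em ep)
      (fun u v => by beta_reduce; rw [hnh, htr]) (fun u v => (hid _).symm)
      (by beta_reduce; rw [hnm]) (by beta_reduce; rw [hnp, hcm]) x
  have main : ∀ mul : I → I → I,
      ((∀ x, mul x em = neg x) ∧ (∀ x, mul x ep = x) ∧
        ∀ x y z, mul x (m y z) = m (mul x y) (mul x z)) →
      (∀ x, mul x (m em ep) = m em ep) ∧ (∀ x y, mul x y = mul y x) ∧
        ∀ x y z, mul (mul x y) z = mul x (mul y z) := by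
    intro mul ⟨h1, h2, h3⟩
    have lem_em : ∀ y, mul em y = neg y := by
      intro y
      exact ext (mul em) neg (h3 em) hnh
        (by rw [h1]) (by rw [h2, hnp]) y
    have lem_ep : ∀ y, mul ep y = y := by
      intro y
      exact ext (mul ep) (fun y => y) (h3 ep) (fun u v => rfl)
        (by beta_reduce; rw [h1, hnp]) (h2 ep) y
    have homL : ∀ a b c, mul (m a b) c = m (mul a c) (mul b c) := by
      intro a b c
      exact ext (mul (m a b)) (fun c => m (mul a c) (mul b c))
        (h3 (m a b)) (fun u v => by beta_reduce; rw [h3, h3, htr])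
        (by beta_reduce; rw [h1, hnh, h1, h1]) (by beta_reduce; rw [h2, h2, h2]) c
    have comm : ∀ x y, mul x y = mul y x := by
      intro x y
      exact ext (mul x) (fun y => mul y x) (h3 x) (fun u v => homL u v x)
        (by beta_reduce; rw [h1, lem_em]) (by beta_reduce; rw [h2, lem_ep]) y
    have negmul : ∀ x y, neg (mul x y) = mul x (neg y) := by
      intro x y
      exact ext (fun y => neg (mul x y)) (fun y => mul x (neg y))
        (fun u v => by beta_reduce; rw [h3, hnh]) (fun u v => by beta_reduce; rw [hnh, h3])
        (by beta_reduce; rw [h1, nn, hnm, h2]) (by beta_reduce; rw [h2, hnp, h1]) y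
    refine ⟨?_, comm, ?_⟩
    · intro x
      rw [h3, h1, h2, hcm, mo]
    · intro x y z
      exact ext (mul (mul x y)) (fun z => mul x (mul y z))
        (h3 (mul x y)) (fun u v => by beta_reduce; rw [h3, h3])
        (by beta_reduce; rw [h1, h1, negmul]) (by beta_reduce; rw [h2, h2]) z
  obtain ⟨mul, hp, hmu⟩ := huniv I I m ⟨hid, hcm, htr⟩ hc hit neg (fun x => x)
  refine ⟨⟨mul, ⟨hp.1, hp.2.1, fun x y z => hp.2.2 x y z⟩, ?_⟩, main⟩
  intro g hg
  exact hmu g ⟨hg.1, hg.2.1, fun p u v => hg.2.2 p u v⟩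
end
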